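/- arXiv:1502.05453 — 11 statements merged into one kernel-verified Lean document; each statement's English description precedes it below -/
import Mathlib

section
/- Let p, q ≥ 3 be integers and let A, B ∈ SL(2,ℂ) satisfy tr A = 2cos(π/p) and tr B = 2cos(π/q). Set γ = tr(ABA⁻¹B⁻¹) − 2, λ = tr(A)·tr(B)·tr(AB), a = 8cos(π/p)cos(π/q)cos(π/p + π/q), b = 16cos²(π/p)cos²(π/q), c = 4sin(2π/p)sin(2π/q), and ε = λ − a. Then b·γ = ε·(ε − c). -/
open scoped Real

/-- Fricke trace identity for SL(2,ℂ). -/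
lemma fricke (A B : Matrix.SpecialLinearGroup (Fin 2) ℂ) :
    Matrix.trace ((A * B * A⁻¹ * B⁻¹ : Matrix.SpecialLinearGroup (Fin 2) ℂ) :
      Matrix (Fin 2) (Fin 2) ℂ)
    = (Matrix.trace (A : Matrix (Fin 2) (Fin 2) ℂ))^2
      + (Matrix.trace (B : Matrix (Fin 2) (Fin 2) ℂ))^2
      + (Matrix.trace ((A : Matrix (Fin 2) (Fin 2) ℂ) * (B : Matrix (Fin 2) (Fin 2) ℂ)))^2
      - Matrix.trace (A : Matrix (Fin 2) (Fin 2) ℂ) * Matrix.trace (B : Matrix (Fin 2) (Fin 2) ℂ)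
        * Matrix.trace ((A : Matrix (Fin 2) (Fin 2) ℂ) * (B : Matrix (Fin 2) (Fin 2) ℂ))
      - 2 := by
  have hdA := A.prop
  have hdB := B.prop
  rw [Matrix.det_fin_two] at hdA hdB
  simp only [Matrix.SpecialLinearGroup.coe_mul, Matrix.SpecialLinearGroup.coe_inv,
    Matrix.adjugate_fin_two]
  simp only [Matrix.trace_fin_two, Matrix.mul_apply, Fin.sum_univ_two, Matrix.of_apply,
    Matrix.cons_val', Matrix.cons_val_zero, Matrix.cons_val_one, Matrix.head_cons,
    Matrix.empty_val', Matrix.cons_val_fin_one, Matrix.head_fin_const]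
  linear_combination (((B : Matrix (Fin 2) (Fin 2) ℂ) 0 0 + (B : Matrix (Fin 2) (Fin 2) ℂ) 1 1)^2 - 2) * hdA
    + (((A : Matrix (Fin 2) (Fin 2) ℂ) 0 0 + (A : Matrix (Fin 2) (Fin 2) ℂ) 1 1)^2
       - 2 * ((A : Matrix (Fin 2) (Fin 2) ℂ) 0 0 * (A : Matrix (Fin 2) (Fin 2) ℂ) 1 1
              - (A : Matrix (Fin 2) (Fin 2) ℂ) 0 1 * (A : Matrix (Fin 2) (Fin 2) ℂ) 1 0)) * hdB

/-- Let p, q ≥ 3 and A, B ∈ SL(2,ℂ) with tr A = 2cos(π/p), tr B = 2cos(π/q).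
With γ = tr(ABA⁻¹B⁻¹) − 2, λ = tr(A)tr(B)tr(AB), a = 8cos(π/p)cos(π/q)cos(π/p+π/q),
b = 16cos²(π/p)cos²(π/q), c = 4sin(2π/p)sin(2π/q), ε = λ − a, one has b·γ = ε·(ε − c). -/
theorem stmt_1 (p q : ℕ) (hp : 3 ≤ p) (hq : 3 ≤ q)
    (A B : Matrix.SpecialLinearGroup (Fin 2) ℂ)
    (hA : Matrix.trace (A : Matrix (Fin 2) (Fin 2) ℂ) = ((2 * Real.cos (π / p) : ℝ) : ℂ))
    (hB : Matrix.trace (B : Matrix (Fin 2) (Fin 2) ℂ) = ((2 * Real.cos (π / q) : ℝ) : ℂ))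
    (γ lam a b c ε : ℂ)
    (hγ : γ = Matrix.trace ((A * B * A⁻¹ * B⁻¹ : Matrix.SpecialLinearGroup (Fin 2) ℂ) :
      Matrix (Fin 2) (Fin 2) ℂ) - 2)
    (hlam : lam = Matrix.trace (A : Matrix (Fin 2) (Fin 2) ℂ) *
      Matrix.trace (B : Matrix (Fin 2) (Fin 2) ℂ) *
      Matrix.trace ((A * B : Matrix.SpecialLinearGroup (Fin 2) ℂ) : Matrix (Fin 2) (Fin 2) ℂ))
    (ha : a = ((8 * Real.cos (π / p) * Real.cos (π / q) * Real.cos (π / p + π / q) : ℝ) : ℂ))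
    (hb : b = ((16 * Real.cos (π / p) ^ 2 * Real.cos (π / q) ^ 2 : ℝ) : ℂ))
    (hc : c = ((4 * Real.sin (2 * π / p) * Real.sin (2 * π / q) : ℝ) : ℂ))
    (hε : ε = lam - a) :
    b * γ = ε * (ε - c) := by
  have h2p : (2 : ℝ) * π / p = 2 * (π / p) := by ring
  have h2q : (2 : ℝ) * π / q = 2 * (π / q) := by ring
  rw [h2p, h2q, Real.sin_two_mul, Real.sin_two_mul] at hc
  rw [Real.cos_add] at ha
  have hz : Matrix.trace ((A * B : Matrix.SpecialLinearGroup (Fin 2) ℂ) :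
      Matrix (Fin 2) (Fin 2) ℂ)
      = Matrix.trace ((A : Matrix (Fin 2) (Fin 2) ℂ) * (B : Matrix (Fin 2) (Fin 2) ℂ)) := by
    simp
  set Cp := Real.cos (π / p)
  set Sp := Real.sin (π / p)
  set Cq := Real.cos (π / q)
  set Sq := Real.sin (π / q)
  have hsp : ((Sp : ℂ))^2 = 1 - (Cp : ℂ)^2 := by
    have := Real.sin_sq_add_cos_sq (π / p)
    push_cast
    have : (Sp : ℝ)^2 = 1 - Cp^2 := by nlinarith [Real.sin_sq_add_cos_sq (π / p)]
    exact_mod_cast congrArg (fun x : ℝ => (x : ℂ)) this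
  have hsq : ((Sq : ℂ))^2 = 1 - (Cq : ℂ)^2 := by
    have : (Sq : ℝ)^2 = 1 - Cq^2 := by nlinarith [Real.sin_sq_add_cos_sq (π / q)]
    exact_mod_cast congrArg (fun x : ℝ => (x : ℂ)) this
  set z := Matrix.trace ((A : Matrix (Fin 2) (Fin 2) ℂ) * (B : Matrix (Fin 2) (Fin 2) ℂ)) with hzdef
  rw [fricke A B, hA, hB] at hγ
  rw [hz] at hlam
  rw [hA, hB] at hlam
  subst hγ hlam ha hb hc hε
  push_cast
  linear_combination (64 * (Cp:ℂ)^2 * (Cq:ℂ)^2 * (Sq:ℂ)^2) * hsp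
    + (64 * (Cp:ℂ)^2 * (Cq:ℂ)^2 * (1 - (Cp:ℂ)^2)) * hsq
end

section
/- Let p, q ≥ 2 be integers and w ∈ ℂ with w ≠ 0. For the matrices A = [[cos(π/p), i sin(π/p)], [i sin(π/p), cos(π/p)]] and B = [[cos(π/q), i w sin(π/q)], [i w⁻¹ sin(π/q), cos(π/q)]] in SL(2,ℂ), one has tr(ABA⁻¹B⁻¹) − 2 = sin²(π/p)·sin²(π/q)·(w − 1/w)². -/
open scoped Real

/-- For p, q ≥ 2, w ≠ 0, and A = [[cos(π/p), i sin(π/p)],[i sin(π/p), cos(π/p)]],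
B = [[cos(π/q), i w sin(π/q)],[i w⁻¹ sin(π/q), cos(π/q)]] in SL(2,ℂ), one has
tr(ABA⁻¹B⁻¹) − 2 = sin²(π/p)·sin²(π/q)·(w − 1/w)². -/
theorem stmt_2 (p q : ℕ) (hp : 2 ≤ p) (hq : 2 ≤ q) (w : ℂ) (hw : w ≠ 0)
    (A B : Matrix.SpecialLinearGroup (Fin 2) ℂ)
    (hA : (A : Matrix (Fin 2) (Fin 2) ℂ) =
      !![((Real.cos (π / p) : ℝ) : ℂ), Complex.I * ((Real.sin (π / p) : ℝ) : ℂ);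
         Complex.I * ((Real.sin (π / p) : ℝ) : ℂ), ((Real.cos (π / p) : ℝ) : ℂ)])
    (hB : (B : Matrix (Fin 2) (Fin 2) ℂ) =
      !![((Real.cos (π / q) : ℝ) : ℂ), Complex.I * w * ((Real.sin (π / q) : ℝ) : ℂ);
         Complex.I * w⁻¹ * ((Real.sin (π / q) : ℝ) : ℂ), ((Real.cos (π / q) : ℝ) : ℂ)]) :
    Matrix.trace ((A * B * A⁻¹ * B⁻¹ : Matrix.SpecialLinearGroup (Fin 2) ℂ) :
      Matrix (Fin 2) (Fin 2) ℂ) - 2 =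
      ((Real.sin (π / p) ^ 2 : ℝ) : ℂ) * ((Real.sin (π / q) ^ 2 : ℝ) : ℂ) * (w - 1 / w) ^ 2 := by
  set a : ℂ := ((Real.cos (π / p) : ℝ) : ℂ)
  set s : ℂ := ((Real.sin (π / p) : ℝ) : ℂ)
  set b : ℂ := ((Real.cos (π / q) : ℝ) : ℂ)
  set t : ℂ := ((Real.sin (π / q) : ℝ) : ℂ)
  have hps : a ^ 2 + s ^ 2 = 1 := by
    simp only [a, s]
    norm_cast
    exact Real.cos_sq_add_sin_sq _
  have hqs : b ^ 2 + t ^ 2 = 1 := by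
    simp only [b, t]
    norm_cast
    exact Real.cos_sq_add_sin_sq _
  have hAi : ((A⁻¹ : Matrix.SpecialLinearGroup (Fin 2) ℂ) : Matrix (Fin 2) (Fin 2) ℂ) =
      !![a, -(Complex.I * s); -(Complex.I * s), a] := by
    rw [Matrix.SpecialLinearGroup.coe_inv, hA, Matrix.adjugate_fin_two]
    norm_num
  have hBi : ((B⁻¹ : Matrix.SpecialLinearGroup (Fin 2) ℂ) : Matrix (Fin 2) (Fin 2) ℂ) =
      !![b, -(Complex.I * w * t); -(Complex.I * w⁻¹ * t), b] := by
    rw [Matrix.SpecialLinearGroup.coe_inv, hB, Matrix.adjugate_fin_two]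
    norm_num
  have hI : Complex.I ^ 2 = -1 := Complex.I_sq
  rw [Matrix.SpecialLinearGroup.coe_mul, Matrix.SpecialLinearGroup.coe_mul,
    Matrix.SpecialLinearGroup.coe_mul, hA, hB, hAi, hBi]
  simp [Matrix.trace_fin_two, Matrix.mul_apply, Fin.sum_univ_succ]
  have hw2 : w * w⁻¹ = 1 := mul_inv_cancel₀ hw
  have hcp : (↑π / (↑p:ℂ)) = ((π / p : ℝ) : ℂ) := by push_cast; ring
  have hcq : (↑π / (↑q:ℂ)) = ((π / q : ℝ) : ℂ) := by push_cast; ring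
  rw [hcp, hcq, ← Complex.ofReal_sin, ← Complex.ofReal_sin]
  linear_combination (s^2*t^2*(w⁻¹^2+w^2)*(Complex.I^2-1) + 2*a*b*s*t*(w⁻¹+w)
      - 2*(a*w*t+s*b)*(s*b+a*t*w⁻¹)) * hI
    + (2*b^2 + 2*t^2 + 2*t^2*(w*w⁻¹ - 1)) * hps + 2*hqs + 2*t^2*hw2
end

section
/- Let p, q ≥ 2 be integers and let w = r e^{iθ} with r > 0 and θ ∈ ℝ. If |i w cot(π/q) + i cot(π/p)| + |w|/sin(π/q) = 1/sin(π/p), then r² + 1/r² = 4(1 + cos(π/p)cos(π/q)·cos θ)²/(sin(π/p)sin(π/q))² − 2. -/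
open scoped Real

/-- Let p, q ≥ 2 and w = r e^{iθ} with r > 0. If
|i w cot(π/q) + i cot(π/p)| + |w|/sin(π/q) = 1/sin(π/p), then
r² + 1/r² = 4(1 + cos(π/p)cos(π/q)cos θ)²/(sin(π/p)sin(π/q))² − 2. -/
theorem stmt_3 (p q : ℕ) (hp : 2 ≤ p) (hq : 2 ≤ q) (r θ : ℝ) (hr : 0 < r)
    (w : ℂ) (hw : w = (r : ℂ) * Complex.exp ((θ : ℂ) * Complex.I))
    (heq : ‖Complex.I * w * ((Real.cos (π / q) / Real.sin (π / q) : ℝ) : ℂ)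
        + Complex.I * ((Real.cos (π / p) / Real.sin (π / p) : ℝ) : ℂ)‖
        + ‖w‖ / Real.sin (π / q) = 1 / Real.sin (π / p)) :
    r ^ 2 + 1 / r ^ 2 =
      4 * (1 + Real.cos (π / p) * Real.cos (π / q) * Real.cos θ) ^ 2 /
        (Real.sin (π / p) * Real.sin (π / q)) ^ 2 - 2 := by
  set sp := Real.sin (π / p) with hsp_def
  set sq := Real.sin (π / q) with hsq_def
  set cp := Real.cos (π / p) with hcp_def
  set cq := Real.cos (π / q) with hcq_def
  have hp1 : (1 : ℝ) < p := by exact_mod_cast hp.trans_lt' one_lt_two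
  have hq1 : (1 : ℝ) < q := by exact_mod_cast hq.trans_lt' one_lt_two
  have hsp : 0 < sp := Real.sin_pos_of_pos_of_lt_pi
    (div_pos Real.pi_pos (by linarith)) (div_lt_self Real.pi_pos hp1)
  have hsq : 0 < sq := Real.sin_pos_of_pos_of_lt_pi
    (div_pos Real.pi_pos (by linarith)) (div_lt_self Real.pi_pos hq1)
  have habsw : ‖w‖ = r := by
    rw [hw]
    simp [Complex.norm_exp_ofReal_mul_I, abs_of_pos hr]
  have hz : Complex.I * w * ((cq / sq : ℝ) : ℂ) + Complex.I * ((cp / sp : ℝ) : ℂ)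
      = ((-(r * Real.sin θ * (cq / sq)) : ℝ) : ℂ)
        + ((r * Real.cos θ * (cq / sq) + cp / sp : ℝ) : ℂ) * Complex.I := by
    rw [hw, Complex.exp_mul_I]
    push_cast [← Complex.ofReal_cos, ← Complex.ofReal_sin]
    linear_combination ((r : ℂ) * (Real.sin θ : ℂ) * (cq : ℂ) * ((sq : ℂ))⁻¹) * Complex.I_sq
  have hA2 : (‖Complex.I * w * ((cq / sq : ℝ) : ℂ)
      + Complex.I * ((cp / sp : ℝ) : ℂ)‖) ^ 2
      = (-(r * Real.sin θ * (cq / sq))) ^ 2 + (r * Real.cos θ * (cq / sq) + cp / sp) ^ 2 := by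
    rw [hz, Complex.sq_norm, Complex.normSq_add_mul_I]
  have hA : ‖Complex.I * w * ((cq / sq : ℝ) : ℂ)
      + Complex.I * ((cp / sp : ℝ) : ℂ)‖ = 1 / sp - r / sq := by
    rw [habsw] at heq; linarith
  rw [hA] at hA2
  have hsin2 : Real.sin θ ^ 2 = 1 - Real.cos θ ^ 2 := by
    have h := Real.sin_sq_add_cos_sq θ; linarith
  have hcp2 : cp ^ 2 = 1 - sp ^ 2 := by
    have h := Real.sin_sq_add_cos_sq (π / p)
    rw [← hsp_def, ← hcp_def] at h; linarith
  have hcq2 : cq ^ 2 = 1 - sq ^ 2 := by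
    have h := Real.sin_sq_add_cos_sq (π / q)
    rw [← hsq_def, ← hcq_def] at h; linarith
  have hE : r ^ 2 * cq ^ 2 * sp ^ 2 + 2 * r * Real.cos θ * cq * cp * sp * sq
      + cp ^ 2 * sq ^ 2 = sq ^ 2 - 2 * r * sp * sq + r ^ 2 * sp ^ 2 := by
    have hsp' := hsp.ne'
    have hsq' := hsq.ne'
    field_simp at hA2
    have hE' : (r ^ 2 * cq ^ 2 * sp ^ 2 + 2 * r * Real.cos θ * cq * cp * sp * sq
        + cp ^ 2 * sq ^ 2) * (sq ^ 4 * sp ^ 2)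
        = (sq ^ 2 - 2 * r * sp * sq + r ^ 2 * sp ^ 2) * (sq ^ 4 * sp ^ 2) := by
      linear_combination (-(sq ^ 4 * sp ^ 2)) * hA2 - (r ^ 2 * cq ^ 2 * sq ^ 4 * sp ^ 4) * hsin2
    exact mul_right_cancel₀ (by positivity) hE'
  have hlin0 : sp * sq * (r ^ 2 * sp * sq + sp * sq - 2 * r * (1 + cp * cq * Real.cos θ)) = 0 := by
    linear_combination (-1 : ℝ) * hE + (r ^ 2 * sp ^ 2) * hcq2 + sq ^ 2 * hcp2
  have hlin : r ^ 2 * sp * sq + sp * sq = 2 * r * (1 + cp * cq * Real.cos θ) := by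
    rcases mul_eq_zero.mp hlin0 with h | h
    · exact absurd h (by positivity)
    · linarith
  have hr2 : r ^ 2 ≠ 0 := by positivity
  have hspq : (sp * sq) ^ 2 ≠ 0 := by positivity
  have h1X : 1 + cp * cq * Real.cos θ = (r ^ 2 + 1) * sp * sq / (2 * r) := by
    field_simp
    linarith [hlin]
  rw [h1X]
  field_simp
  ring
end

section
/- Let p, q ≥ 2 be integers, c = cos(π/p)cos(π/q), s = sin(π/p)sin(π/q). Then for every t ∈ [0,1], the real part of Ω_{p,q}(t), namely 4(2t²−1)(1+tc)² − 4t²s², is at most 4(cos(π/p) + cos(π/q))². -/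
open scoped Real

/-- The contour point Ω_{p,q}(t). -/
noncomputable def Omega (p q : ℕ) (t : ℝ) : ℂ :=
  ((4 * (2 * t ^ 2 - 1) * (1 + t * (Real.cos (π / p) * Real.cos (π / q))) ^ 2
      - 4 * t ^ 2 * (Real.sin (π / p) * Real.sin (π / q)) ^ 2 : ℝ) : ℂ)
  - ((8 * t * Real.sqrt (1 - t ^ 2) * (1 + t * (Real.cos (π / p) * Real.cos (π / q)))
      * Real.sqrt ((1 + t * (Real.cos (π / p) * Real.cos (π / q))) ^ 2
        - (Real.sin (π / p) * Real.sin (π / q)) ^ 2) : ℝ) : ℂ) * Complex.I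

lemma key_ineq (a b t : ℝ) (ha : 0 ≤ a) (hb : 0 ≤ b)
    (ht0 : 0 ≤ t) (ht1 : t ≤ 1) :
    4 * (2 * t ^ 2 - 1) * (1 + t * (a * b)) ^ 2 - 4 * t ^ 2 * ((1 - a^2) * (1 - b^2))
      ≤ 4 * (a + b) ^ 2 := by
  have h1 : 0 ≤ (1 - t^2) * (1 + a^2 + b^2 + 2*t^2*a^2*b^2) := by
    apply mul_nonneg (by nlinarith) (by positivity)
  have h2 : 0 ≤ (a*b) * ((1 - t) * (2*t^2 + 2*t + 1)) := by
    apply mul_nonneg (mul_nonneg ha hb) (mul_nonneg (by linarith) (by positivity))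
  nlinarith [h1, h2]

/-- For p, q ≥ 2 and t ∈ [0,1], the real part of Ω_{p,q}(t), namely
4(2t²−1)(1+tc)² − 4t²s², is at most 4(cos(π/p) + cos(π/q))². -/
theorem stmt_4 (p q : ℕ) (hp : 2 ≤ p) (hq : 2 ≤ q)
    (t : ℝ) (ht : t ∈ Set.Icc (0 : ℝ) 1) :
    (Omega p q t).re ≤ 4 * (Real.cos (π / p) + Real.cos (π / q)) ^ 2 := by
  obtain ⟨ht0, ht1⟩ := ht
  have hre : (Omega p q t).re
      = 4 * (2 * t ^ 2 - 1) * (1 + t * (Real.cos (π / p) * Real.cos (π / q))) ^ 2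
        - 4 * t ^ 2 * (Real.sin (π / p) * Real.sin (π / q)) ^ 2 := by
    simp only [Omega, Complex.sub_re, Complex.mul_re, Complex.I_re, Complex.I_im,
      Complex.ofReal_re, Complex.ofReal_im]
    ring
  have hπ : (0:ℝ) < π := Real.pi_pos
  have hcosp : 0 ≤ Real.cos (π / p) := by
    apply Real.cos_nonneg_of_mem_Icc
    constructor
    · have : 0 ≤ π / p := by positivity
      linarith
    · rw [div_le_div_iff₀ (by positivity) (by norm_num)]
      have : (2:ℝ) ≤ p := by exact_mod_cast hp
      nlinarith
  have hcosq : 0 ≤ Real.cos (π / q) := by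
    apply Real.cos_nonneg_of_mem_Icc
    constructor
    · have : 0 ≤ π / q := by positivity
      linarith
    · rw [div_le_div_iff₀ (by positivity) (by norm_num)]
      have : (2:ℝ) ≤ q := by exact_mod_cast hq
      nlinarith
  have hs : (Real.sin (π / p) * Real.sin (π / q)) ^ 2
      = (1 - Real.cos (π / p) ^ 2) * (1 - Real.cos (π / q) ^ 2) := by
    rw [mul_pow]
    rw [Real.sin_sq, Real.sin_sq]
  rw [hre, hs]
  exact key_ineq _ _ _ hcosp hcosq ht0 ht1
end

section
/- Let p, q ≥ 2 be integers, c = cos(π/p)cos(π/q), s = sin(π/p)sin(π/q). Then for every t ∈ [0,1], |Ω_{p,q}(t)| = 4((1+tc)² − t²s²); moreover, if c ≥ s (which holds in particular when p, q ≥ 6), then |Ω_{p,q}(t)| ≤ 4(cos(π/p) + cos(π/q))². -/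
open scoped Real

theorem aux_abs (c s t : ℝ) (hc0 : 0 ≤ c) (hs0 : 0 ≤ s) (hs1 : s ≤ 1)
    (ht0 : 0 ≤ t) (ht1 : t ≤ 1) :
    ‖(((4 * (2 * t ^ 2 - 1) * (1 + t * c) ^ 2 - 4 * t ^ 2 * s ^ 2 : ℝ) : ℂ)
      - ((8 * t * Real.sqrt (1 - t ^ 2) * (1 + t * c)
          * Real.sqrt ((1 + t * c) ^ 2 - s ^ 2) : ℝ) : ℂ) * Complex.I)‖
      = 4 * ((1 + t * c) ^ 2 - t ^ 2 * s ^ 2) := by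
  have ha1 : (1:ℝ) ≤ 1 + t * c := le_add_of_nonneg_right (mul_nonneg ht0 hc0)
  have hAs : 0 ≤ (1 + t * c) ^ 2 - s ^ 2 := by
    have := pow_le_pow_left₀ hs0 (hs1.trans ha1) 2
    linarith
  have hts1 : t * s ≤ 1 := mul_le_one₀ ht1 hs0 hs1
  have hAts : 0 ≤ (1 + t * c) ^ 2 - t ^ 2 * s ^ 2 := by
    have h := pow_le_pow_left₀ (mul_nonneg ht0 hs0) (hts1.trans ha1) 2
    have h2 : (t * s) ^ 2 = t ^ 2 * s ^ 2 := by ring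
    linarith
  have ht2 : t ^ 2 ≤ 1 := by nlinarith
  set X : ℝ := 4 * (2 * t ^ 2 - 1) * (1 + t * c) ^ 2 - 4 * t ^ 2 * s ^ 2 with hX
  set Y : ℝ := 8 * t * Real.sqrt (1 - t ^ 2) * (1 + t * c)
      * Real.sqrt ((1 + t * c) ^ 2 - s ^ 2) with hY
  have hΩ : ((X : ℝ) : ℂ) - ((Y : ℝ) : ℂ) * Complex.I = (X : ℂ) + (-Y : ℝ) * Complex.I := by
    push_cast; ring
  rw [hΩ, Complex.norm_add_mul_I]
  have h1 : Real.sqrt (1 - t ^ 2) ^ 2 = 1 - t ^ 2 := Real.sq_sqrt (by linarith)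
  have h2 : Real.sqrt ((1 + t * c) ^ 2 - s ^ 2) ^ 2 = (1 + t * c) ^ 2 - s ^ 2 :=
    Real.sq_sqrt hAs
  have hsum : X ^ 2 + (-Y) ^ 2 = (4 * ((1 + t * c) ^ 2 - t ^ 2 * s ^ 2)) ^ 2 := by
    have hY2 : Y ^ 2 = 64 * t ^ 2 * (1 - t ^ 2) * (1 + t * c) ^ 2
        * ((1 + t * c) ^ 2 - s ^ 2) := by
      rw [show Y ^ 2 = 64 * t ^ 2 * (Real.sqrt (1 - t ^ 2)) ^ 2 * (1 + t * c) ^ 2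
          * (Real.sqrt ((1 + t * c) ^ 2 - s ^ 2)) ^ 2 from by rw [hY]; ring, h1, h2]
    have hnegY : (-Y) ^ 2 = Y ^ 2 := by ring
    rw [hnegY, hY2, hX]; ring
  rw [hsum, Real.sqrt_sq (by linarith)]

theorem aux_mono (c s t : ℝ) (hc0 : 0 ≤ c) (hs0 : 0 ≤ s)
    (ht0 : 0 ≤ t) (ht1 : t ≤ 1) (hsc : s ≤ c) :
    (1 + t * c) ^ 2 - t ^ 2 * s ^ 2 ≤ (1 + c) ^ 2 - s ^ 2 := by
  have ht2 : t ^ 2 ≤ 1 := by nlinarith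
  have e1 : 0 ≤ (c - s) * (c + s) * (1 - t ^ 2) :=
    mul_nonneg (mul_nonneg (by linarith) (by linarith)) (by linarith)
  have e2 : 0 ≤ c * (1 - t) := mul_nonneg hc0 (by linarith)
  nlinarith [e1, e2]

/-- For p, q ≥ 2, c = cos(π/p)cos(π/q), s = sin(π/p)sin(π/q) and t ∈ [0,1],
|Ω_{p,q}(t)| = 4((1+tc)² − t²s²); moreover if c ≥ s (as holds when p, q ≥ 6), then
|Ω_{p,q}(t)| ≤ 4(cos(π/p) + cos(π/q))². -/
theorem stmt_5 (p q : ℕ) (hp : 2 ≤ p) (hq : 2 ≤ q)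
    (t : ℝ) (ht : t ∈ Set.Icc (0 : ℝ) 1) :
    ‖Omega p q t‖ =
      4 * ((1 + t * (Real.cos (π / p) * Real.cos (π / q))) ^ 2
        - t ^ 2 * (Real.sin (π / p) * Real.sin (π / q)) ^ 2) ∧
    (Real.sin (π / p) * Real.sin (π / q) ≤ Real.cos (π / p) * Real.cos (π / q) →
      ‖Omega p q t‖ ≤ 4 * (Real.cos (π / p) + Real.cos (π / q)) ^ 2) := by
  obtain ⟨ht0, ht1⟩ := ht
  have hp0 : (0:ℝ) < p := by positivity
  have hq0 : (0:ℝ) < q := by positivity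
  have hp2 : (2:ℝ) ≤ p := by exact_mod_cast hp
  have hq2 : (2:ℝ) ≤ q := by exact_mod_cast hq
  have hpi : (0:ℝ) < π := Real.pi_pos
  have hap : π / p ≤ π / 2 := div_le_div_of_nonneg_left hpi.le (by norm_num) hp2
  have haq : π / q ≤ π / 2 := div_le_div_of_nonneg_left hpi.le (by norm_num) hq2
  have hap0 : 0 ≤ π / p := by positivity
  have haq0 : 0 ≤ π / q := by positivity
  have hcp : 0 ≤ Real.cos (π / p) :=
    Real.cos_nonneg_of_mem_Icc ⟨by linarith, hap⟩
  have hcq : 0 ≤ Real.cos (π / q) :=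
    Real.cos_nonneg_of_mem_Icc ⟨by linarith, haq⟩
  have hsp0 : 0 ≤ Real.sin (π / p) :=
    Real.sin_nonneg_of_nonneg_of_le_pi hap0 (by linarith)
  have hsq0 : 0 ≤ Real.sin (π / q) :=
    Real.sin_nonneg_of_nonneg_of_le_pi haq0 (by linarith)
  have hsp1 : Real.sin (π / p) ≤ 1 := Real.sin_le_one _
  have hsq1 : Real.sin (π / q) ≤ 1 := Real.sin_le_one _
  have hc0 : 0 ≤ Real.cos (π / p) * Real.cos (π / q) := mul_nonneg hcp hcq
  have hs0 : 0 ≤ Real.sin (π / p) * Real.sin (π / q) := mul_nonneg hsp0 hsq0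
  have hs1 : Real.sin (π / p) * Real.sin (π / q) ≤ 1 := mul_le_one₀ hsp1 hsq0 hsq1
  have hval : ‖Omega p q t‖
      = 4 * ((1 + t * (Real.cos (π / p) * Real.cos (π / q))) ^ 2
        - t ^ 2 * (Real.sin (π / p) * Real.sin (π / q)) ^ 2) := by
    rw [Omega]
    exact aux_abs _ _ _ hc0 hs0 hs1 ht0 ht1
  refine ⟨hval, fun hsc => ?_⟩
  rw [hval]
  have hmono := aux_mono _ _ _ hc0 hs0 ht0 ht1 hsc
  have hsq1' : Real.sin (π / p) ^ 2 + Real.cos (π / p) ^ 2 = 1 :=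
    Real.sin_sq_add_cos_sq _
  have hsq2' : Real.sin (π / q) ^ 2 + Real.cos (π / q) ^ 2 = 1 :=
    Real.sin_sq_add_cos_sq _
  have hkey : (1 + Real.cos (π / p) * Real.cos (π / q)) ^ 2
      - (Real.sin (π / p) * Real.sin (π / q)) ^ 2
      = (Real.cos (π / p) + Real.cos (π / q)) ^ 2 := by
    linear_combination (-(1 - Real.cos (π / q) ^ 2)) * hsq1'
      + (-(Real.sin (π / p)) ^ 2) * hsq2'
  linarith [hmono, hkey.ge, hkey.le]
end

section
/- Let p, q ≥ 2 be integers, c = cos(π/p)cos(π/q), s = sin(π/p)sin(π/q). Then for every t ∈ [0,1] and every real number x with −4s² ≤ x ≤ 0, one has |Ω_{p,q}(t) − x| ≤ 4(1 + cos(π/p)cos(π/q))². -/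
open scoped Real

-- convexity step: quadratic in y on [0,4S]
lemma stmt6_quad (A S y M u : ℝ) (hS0 : 0 ≤ S) (hy0 : 0 ≤ y) (hy4 : y ≤ 4 * S)
    (hG0 : 16 * (A - u * S) ^ 2 ≤ M) (hG4 : 16 * (A - (1 - u) * S) ^ 2 ≤ M) :
    16 * (A - u * S) ^ 2 + 8 * y * ((2 * u - 1) * A - u * S) + y ^ 2 ≤ M := by
  rcases eq_or_lt_of_le hS0 with h0 | hpos
  · have hyz : y = 0 := le_antisymm (by linarith) hy0
    rw [hyz]; simpa using hG0
  · nlinarith [mul_nonneg (by linarith : (0:ℝ) ≤ 4 * S - y)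
        (by linarith : (0:ℝ) ≤ M - 16 * (A - u * S) ^ 2),
      mul_nonneg hy0 (by linarith : (0:ℝ) ≤ M - 16 * (A - (1 - u) * S) ^ 2),
      mul_nonneg (mul_nonneg hS0 hy0) (by linarith : (0:ℝ) ≤ 4 * S - y)]

-- endpoint bound: 0 ≤ u ≤ V → 16 u^2 ≤ (4V)^2
lemma stmt6_endpt (u V : ℝ) (h0 : 0 ≤ u) (h1 : u ≤ V) : 16 * u ^ 2 ≤ (4 * V) ^ 2 := by
  nlinarith [mul_nonneg (by linarith : (0:ℝ) ≤ V - u) (by linarith : (0:ℝ) ≤ V + u)]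

lemma stmt6_key (c s t x : ℝ) (hc0 : 0 ≤ c) (hs0 : 0 ≤ s) (hs1 : s ≤ 1)
    (ht0 : 0 ≤ t) (ht1 : t ≤ 1) (hx1 : -(4 * s ^ 2) ≤ x) (hx2 : x ≤ 0) :
    (4 * (2 * t ^ 2 - 1) * (1 + t * c) ^ 2 - 4 * t ^ 2 * s ^ 2 - x) ^ 2
      + 64 * t ^ 2 * (1 - t ^ 2) * (1 + t * c) ^ 2 * ((1 + t * c) ^ 2 - s ^ 2)
      ≤ (4 * (1 + c) ^ 2) ^ 2 := by
  have ha1 : 1 ≤ 1 + t * c := by nlinarith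
  have hAc : (1 + t * c) ^ 2 ≤ (1 + c) ^ 2 := by
    nlinarith [mul_nonneg hc0 (by linarith : (0:ℝ) ≤ 1 - t),
      mul_nonneg (mul_nonneg hc0 (by linarith : (0:ℝ) ≤ 1 - t))
        (by nlinarith : (0:ℝ) ≤ 2 + c + t * c)]
  have hu1 : t ^ 2 ≤ 1 := by nlinarith
  have hS1 : s ^ 2 ≤ 1 := by nlinarith
  have hG0 : 16 * ((1 + t * c) ^ 2 - t ^ 2 * s ^ 2) ^ 2 ≤ (4 * (1 + c) ^ 2) ^ 2 := by
    apply stmt6_endpt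
    · nlinarith [sq_nonneg (t * s)]
    · nlinarith [sq_nonneg (t * s)]
  have hG4 : 16 * ((1 + t * c) ^ 2 - (1 - t ^ 2) * s ^ 2) ^ 2 ≤ (4 * (1 + c) ^ 2) ^ 2 := by
    apply stmt6_endpt
    · nlinarith
    · nlinarith
  have hq := stmt6_quad ((1 + t * c) ^ 2) (s ^ 2) (-x) ((4 * (1 + c) ^ 2) ^ 2) (t ^ 2)
    (sq_nonneg s) (by linarith) (by linarith) hG0 hG4
  nlinarith [hq]

/-- For p, q ≥ 2, s = sin(π/p)sin(π/q), every t ∈ [0,1] and every real x with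
−4s² ≤ x ≤ 0, one has |Ω_{p,q}(t) − x| ≤ 4(1 + cos(π/p)cos(π/q))². -/
theorem stmt_6 (p q : ℕ) (hp : 2 ≤ p) (hq : 2 ≤ q)
    (t : ℝ) (ht : t ∈ Set.Icc (0 : ℝ) 1)
    (x : ℝ) (hx₁ : -(4 * (Real.sin (π / p) * Real.sin (π / q)) ^ 2) ≤ x) (hx₂ : x ≤ 0) :
    ‖Omega p q t - (x : ℂ)‖ ≤
      4 * (1 + Real.cos (π / p) * Real.cos (π / q)) ^ 2 := by
  obtain ⟨ht0, ht1⟩ := ht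
  have hπ := Real.pi_pos
  have hp' : (2:ℝ) ≤ (p:ℝ) := by exact_mod_cast hp
  have hq' : (2:ℝ) ≤ (q:ℝ) := by exact_mod_cast hq
  have hp0 : (0:ℝ) < (p:ℝ) := by linarith
  have hq0 : (0:ℝ) < (q:ℝ) := by linarith
  have hple : π / p ≤ π / 2 := by
    apply div_le_div_of_nonneg_left hπ.le (by norm_num) hp'
  have hqle : π / q ≤ π / 2 := by
    apply div_le_div_of_nonneg_left hπ.le (by norm_num) hq'
  have hppos : 0 ≤ π / p := le_of_lt (div_pos hπ hp0)
  have hqpos : 0 ≤ π / q := le_of_lt (div_pos hπ hq0)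
  set cp := Real.cos (π / p)
  set cq := Real.cos (π / q)
  set sp := Real.sin (π / p)
  set sq := Real.sin (π / q)
  have hcp0 : 0 ≤ cp := Real.cos_nonneg_of_mem_Icc ⟨by linarith, hple⟩
  have hcq0 : 0 ≤ cq := Real.cos_nonneg_of_mem_Icc ⟨by linarith, hqle⟩
  have hsp0 : 0 ≤ sp := Real.sin_nonneg_of_nonneg_of_le_pi hppos (by linarith)
  have hsq0 : 0 ≤ sq := Real.sin_nonneg_of_nonneg_of_le_pi hqpos (by linarith)
  have hsp1 : sp ≤ 1 := Real.sin_le_one _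
  have hsq1 : sq ≤ 1 := Real.sin_le_one _
  set c := cp * cq with hc
  set s := sp * sq with hs
  have hc0 : 0 ≤ c := mul_nonneg hcp0 hcq0
  have hs0 : 0 ≤ s := mul_nonneg hsp0 hsq0
  have hs1 : s ≤ 1 := by nlinarith
  -- abbreviations
  set a : ℝ := 1 + t * c with ha
  have ha1 : (1:ℝ) ≤ a := by nlinarith
  have hs2 : s ^ 2 ≤ a ^ 2 := by nlinarith
  have hsq1' : Real.sqrt (1 - t ^ 2) ^ 2 = 1 - t ^ 2 :=
    Real.sq_sqrt (by nlinarith)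
  have hsq2' : Real.sqrt (a ^ 2 - s ^ 2) ^ 2 = a ^ 2 - s ^ 2 :=
    Real.sq_sqrt (by linarith)
  set R : ℝ := 4 * (2 * t ^ 2 - 1) * a ^ 2 - 4 * t ^ 2 * s ^ 2 with hR
  set I : ℝ := 8 * t * Real.sqrt (1 - t ^ 2) * a * Real.sqrt (a ^ 2 - s ^ 2) with hI
  have hre : (Omega p q t - (x : ℂ)).re = R - x := by
    simp only [Omega, Complex.sub_re, Complex.mul_re, Complex.I_re, Complex.I_im,
      Complex.ofReal_re, Complex.ofReal_im, mul_zero, mul_one, zero_sub, zero_mul, sub_zero,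
      hR, ha, hc, hs]
    rfl
  have him : (Omega p q t - (x : ℂ)).im = -I := by
    simp only [Omega, Complex.sub_im, Complex.mul_im, Complex.I_re, Complex.I_im,
      Complex.ofReal_re, Complex.ofReal_im, mul_zero, mul_one, zero_mul, sub_zero, zero_add,
      zero_sub, hI, ha, hc, hs]
    ring
  have hI2 : I ^ 2 = 64 * t ^ 2 * (1 - t ^ 2) * a ^ 2 * (a ^ 2 - s ^ 2) := by
    have : I ^ 2 = 64 * t ^ 2 * a ^ 2 * Real.sqrt (1 - t ^ 2) ^ 2
        * Real.sqrt (a ^ 2 - s ^ 2) ^ 2 := by rw [hI]; ring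
    rw [this, hsq1', hsq2']; ring
  have hM0 : (0:ℝ) ≤ 4 * (1 + c) ^ 2 := by positivity
  have hkey := stmt6_key c s t x hc0 hs0 hs1 ht0 ht1 hx₁ hx₂
  have habs2 : ‖Omega p q t - (x : ℂ)‖ ^ 2 ≤ (4 * (1 + c) ^ 2) ^ 2 := by
    rw [Complex.sq_norm, Complex.normSq_apply, hre, him]
    have : (R - x) * (R - x) + -I * -I = (R - x) ^ 2 + I ^ 2 := by ring
    rw [this, hI2]
    calc (R - x) ^ 2 + 64 * t ^ 2 * (1 - t ^ 2) * a ^ 2 * (a ^ 2 - s ^ 2)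
        = (4 * (2 * t ^ 2 - 1) * (1 + t * c) ^ 2 - 4 * t ^ 2 * s ^ 2 - x) ^ 2
          + 64 * t ^ 2 * (1 - t ^ 2) * (1 + t * c) ^ 2 * ((1 + t * c) ^ 2 - s ^ 2) := by
          rw [hR, ha]
      _ ≤ (4 * (1 + c) ^ 2) ^ 2 := hkey
  exact (abs_le_of_sq_le_sq' habs2 hM0).2
end

section
/- Let p, q ≥ 3 be integers and L = ℚ(cos(2π/p), cos(2π/q)) ⊆ ℝ. Let γ ∈ ℂ∖ℝ be an algebraic integer such that the field K = ℚ(γ) ⊆ ℂ contains L, with [K : L] = r; assume every field embedding K → ℂ other than the inclusion K ⊆ ℂ and its complex conjugate has image contained in ℝ; assume |γ| ≤ 4(cos(π/p) + cos(π/q))²; and assume every field embedding τ : K → ℝ satisfies −τ(β₁β₂)/4 < τ(γ) < 0, where β₁β₂ = 16 sin²(π/p) sin²(π/q) is viewed as an element of L ⊆ K. Then 1 ≤ |N_{K/ℚ}(γ)| ≤ 16(cos(π/p) + cos(π/q))⁴ · (4 sin²(π/p) sin²(π/q))⁻² · ∏_σ (σ(β₁β₂)/4)^r, the product being over all field embeddings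 σ : L → ℝ. -/
open scoped Real

/-- Take the real part of a complex-valued ring hom all of whose values are real. -/
def myRealPart {A : Type*} [Ring A] (φ : A →+* ℂ) (h : ∀ x, (φ x).im = 0) : A →+* ℝ where
  toFun x := (φ x).re
  map_one' := by simp
  map_mul' x y := by simp [map_mul, Complex.mul_re, h x, h y]
  map_zero' := by simp
  map_add' x y := by simp [map_add]

@[simp] lemma myRealPart_apply {A : Type*} [Ring A] (φ : A →+* ℂ) (h : ∀ x, (φ x).im = 0)
    (x : A) : myRealPart φ h x = (φ x).re := rfl

set_option synthInstance.maxHeartbeats 1000000 in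
set_option maxHeartbeats 4000000 in
/-- norm bounds for the parameter γ of a candidate arithmetic group. -/
theorem stmt_7 (p q : ℕ) (hp : 3 ≤ p) (hq : 3 ≤ q) (r : ℕ)
    (γ : ℂ) (hγnotreal : γ.im ≠ 0) (hγint : IsIntegral ℤ γ)
    (L K : IntermediateField ℚ ℂ)
    (hL : L = IntermediateField.adjoin ℚ
      {((Real.cos (2 * π / p) : ℝ) : ℂ), ((Real.cos (2 * π / q) : ℝ) : ℂ)})
    (hK : K = IntermediateField.adjoin ℚ {γ})
    (hγK : γ ∈ K)
    (hLK : L ≤ K)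
    (hr : Module.finrank ↥L ↥(IntermediateField.extendScalars hLK) = r)
    (hembs : ∀ φ : ↥K →+* ℂ, φ ≠ algebraMap ↥K ℂ →
      φ ≠ (starRingEnd ℂ).comp (algebraMap ↥K ℂ) → ∀ x : ↥K, (φ x).im = 0)
    (hbound : ‖γ‖ ≤ 4 * (Real.cos (π / p) + Real.cos (π / q)) ^ 2)
    (b : ↥K) (hb : (b : ℂ) = ((16 * Real.sin (π / p) ^ 2 * Real.sin (π / q) ^ 2 : ℝ) : ℂ))
    (bL : ↥L) (hbL : (bL : ℂ) = ((16 * Real.sin (π / p) ^ 2 * Real.sin (π / q) ^ 2 : ℝ) : ℂ))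
    (hτ : ∀ τ : ↥K →+* ℝ, -(τ b) / 4 < τ ⟨γ, hγK⟩ ∧ τ ⟨γ, hγK⟩ < 0) :
    1 ≤ |Algebra.norm ℚ (⟨γ, hγK⟩ : ↥K)| ∧
    ((|Algebra.norm ℚ (⟨γ, hγK⟩ : ↥K)| : ℚ) : ℝ) ≤
      16 * (Real.cos (π / p) + Real.cos (π / q)) ^ 4 *
        (4 * Real.sin (π / p) ^ 2 * Real.sin (π / q) ^ 2)⁻¹ ^ 2 *
        ∏ᶠ σ : (↥L →+* ℝ), (σ bL / 4) ^ r := by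
  classical
  set g : ↥K := (⟨γ, hγK⟩ : ↥K) with hgdef
  -- finite dimensionality
  have hγQ : IsIntegral ℚ γ := hγint.tower_top
  haveI hKfd : FiniteDimensional ℚ ↥K := by
    rw [hK]; exact IntermediateField.adjoin.finiteDimensional hγQ
  -- γ as element of K is integral and nonzero
  have hgint : IsIntegral ℤ g := by
    have h1 : IsIntegral ℤ (algebraMap ↥K ℂ g) := hγint
    exact (isIntegral_algebraMap_iff (algebraMap ↥K ℂ).injective).mp h1
  have hg0 : g ≠ 0 := by
    intro h
    apply hγnotreal
    have : γ = 0 := by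
      have := congrArg (fun x : ↥K => (x : ℂ)) h
      have h2 : γ = ((0 : ↥K) : ℂ) := this
      simpa using h2
    simp [this]
  -- Part 1
  have hnz : Algebra.norm ℚ g ≠ 0 := by
    rw [Algebra.norm_ne_zero_iff]; exact hg0
  obtain ⟨m, hm⟩ := IsIntegrallyClosed.isIntegral_iff.mp (Algebra.isIntegral_norm ℚ hgint)
  have hm0 : m ≠ 0 := by rintro rfl; simp at hm; exact hnz hm.symm
  have part1 : 1 ≤ |Algebra.norm ℚ g| := by
    rw [← hm]
    have : (1 : ℤ) ≤ |m| := Int.one_le_abs (by omega)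
    calc (1 : ℚ) = ((1 : ℤ) : ℚ) := by norm_num
      _ ≤ ((|m| : ℤ) : ℚ) := by exact_mod_cast this
      _ = |(m : ℚ)| := by push_cast; ring
  refine ⟨part1, ?_⟩
  -- Setup for part 2
  letI : Algebra ↥L ↥K := (IntermediateField.inclusion hLK).toRingHom.toAlgebra
  haveI tower : IsScalarTower ℚ ↥L ↥K :=
    IsScalarTower.of_algebraMap_eq (R := ℚ) (S := ↥L) (A := ↥K) (fun q => Subtype.ext rfl)
  haveI : FiniteDimensional ℚ ↥L := FiniteDimensional.left ℚ ↥L ↥K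
  haveI : FiniteDimensional ↥L ↥K := FiniteDimensional.right ℚ ↥L ↥K
  have eLK : ↥(IntermediateField.extendScalars hLK) ≃ₗ[↥L] ↥K :=
    { toFun := fun x => ⟨x.1, x.2⟩, invFun := fun x => ⟨x.1, x.2⟩,
      map_add' := fun x y => rfl, map_smul' := fun c x => Subtype.ext rfl,
      left_inv := fun x => rfl, right_inv := fun x => rfl }
  have hrk : Module.finrank ↥L ↥K = r := by rw [← hr, eLK.finrank_eq]
  have hb' : algebraMap ↥L ↥K bL = b := Subtype.ext (by
    show (bL : ℂ) = (b : ℂ)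
    rw [hb, hbL])
  haveI fibFin : ∀ f : ↥L →ₐ[ℚ] ℂ, Fintype (@AlgHom ↥L ↥K ℂ _ _ _ _ f.toRingHom.toAlgebra) :=
    fun f => letI := f.toRingHom.toAlgebra (R := ↥L) (S := ℂ); by infer_instance
  -- the two complex embeddings
  set ι : ↥K →ₐ[ℚ] ℂ := K.val with hιdef
  set ι' : ↥K →ₐ[ℚ] ℂ :=
    { toRingHom := (starRingEnd ℂ).comp (algebraMap ↥K ℂ),
      commutes' := fun qq => ((starRingEnd ℂ).comp (algebraMap ↥K ℂ)).map_rat_algebraMap qq }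
    with hι'def
  have hιapp : ∀ x : ↥K, ι x = (x : ℂ) := fun x => rfl
  have hι'app : ∀ x : ↥K, ι' x = (starRingEnd ℂ) (x : ℂ) := fun x => rfl
  have htri : ∀ σ : ↥K →ₐ[ℚ] ℂ, σ = ι ∨ σ = ι' ∨ ∀ x : ↥K, (σ x).im = 0 := by
    intro σ
    by_cases h1 : σ = ι
    · exact Or.inl h1
    by_cases h2 : σ = ι'
    · exact Or.inr (Or.inl h2)
    refine Or.inr (Or.inr (hembs σ.toRingHom ?_ ?_))
    · intro hc
      exact h1 (AlgHom.ext fun x => by rw [hιapp]; exact RingHom.congr_fun hc x)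
    · intro hc
      exact h2 (AlgHom.ext fun x => by rw [hι'app]; exact RingHom.congr_fun hc x)
  have hιι' : ι ≠ ι' := by
    intro h
    apply hγnotreal
    have h1 : ι g = ι' g := by rw [h]
    rw [hιapp, hι'app] at h1
    have : (γ : ℂ) = (starRingEnd ℂ) γ := h1
    exact (Complex.conj_eq_iff_im.mp this.symm)
  -- every element of L is real
  have hLreal : ∀ x : ↥L, (x : ℂ).im = 0 := by
    intro x
    have h1 : L ≤ (Complex.ofRealHom.toRatAlgHom.range).toIntermediateField
        (fun c hc => by
          rcases hc with ⟨y, hy⟩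
          exact ⟨y⁻¹, by simp [← hy]⟩) := by
      rw [hL, IntermediateField.adjoin_le_iff]
      rintro z (rfl | rfl)
      · exact ⟨_, rfl⟩
      · exact ⟨_, rfl⟩
    rcases h1 x.2 with ⟨y, hy⟩
    rw [← hy]
    simp
  -- every ℚ-embedding of L into ℂ is real-valued
  have hreal : ∀ (f : ↥L →ₐ[ℚ] ℂ) (x : ↥L), (f x).im = 0 := by
    intro f x
    have hpos : 0 < Fintype.card (@AlgHom ↥L ↥K ℂ _ _ _ _ f.toRingHom.toAlgebra) := by
      have hcard : Fintype.card (@AlgHom ↥L ↥K ℂ _ _ _ _ f.toRingHom.toAlgebra)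
          = Module.finrank ↥L ↥K := by
        letI := f.toRingHom.toAlgebra (R := ↥L) (S := ℂ)
        convert AlgHom.card ↥L ↥K ℂ
      rw [hcard]
      exact Module.finrank_pos
    obtain ⟨g0⟩ := Fintype.card_pos_iff.mp hpos
    set φ : ↥K →ₐ[ℚ] ℂ :=
      (algHomEquivSigma (A := ℚ) (B := ↥L) (C := ↥K) (D := ℂ)).symm ⟨f, g0⟩ with hφdef
    have hφ : φ (algebraMap ↥L ↥K x) = f x :=
      @AlgHom.commutes ↥L ↥K ℂ _ _ _ _ f.toRingHom.toAlgebra g0 x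
    rw [← hφ]
    rcases htri φ with h | h | h
    · rw [h, hιapp]
      exact hLreal x
    · rw [h, hι'app, Complex.conj_im, neg_eq_zero]
      exact hLreal x
    · exact h _
  -- the equivalence between real embeddings of L and complex embeddings of L
  set e2 : (↥L →+* ℝ) ≃ (↥L →ₐ[ℚ] ℂ) :=
    { toFun := fun τ =>
        { toRingHom := Complex.ofRealHom.comp τ,
          commutes' := fun qq => (Complex.ofRealHom.comp τ).map_rat_algebraMap qq }
      invFun := fun f => myRealPart f.toRingHom (hreal f)
      left_inv := fun τ => RingHom.ext fun x => by
        show (Complex.ofRealHom (τ x)).re = τ x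
        simp
      right_inv := fun f => AlgHom.ext fun x => by
        show Complex.ofRealHom ((f x).re) = f x
        apply Complex.ext
        · simp
        · simp [hreal f x] }
    with he2def
  haveI ftR : Fintype (↥L →+* ℝ) := Fintype.ofEquiv _ e2.symm
  -- the bound function
  set u : (↥K →ₐ[ℚ] ℂ) → ℝ := fun σ => (σ b).re / 4 with hudef
  -- fibre counting
  have key : ∏ σ : ↥K →ₐ[ℚ] ℂ, u σ = ∏ f : ↥L →ₐ[ℚ] ℂ, ((f bL).re / 4) ^ r := by
    rw [← Equiv.prod_comp (algHomEquivSigma (A := ℚ) (B := ↥L) (C := ↥K) (D := ℂ)).symm u]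
    rw [← Finset.univ_sigma_univ, Finset.prod_sigma]
    refine Finset.prod_congr rfl fun f _ => ?_
    have hterm : ∀ g1 : @AlgHom ↥L ↥K ℂ _ _ _ _ f.toRingHom.toAlgebra,
        u ((algHomEquivSigma).symm ⟨f, g1⟩) = (f bL).re / 4 := by
      intro g1
      rw [hudef]
      show ((algHomEquivSigma (A := ℚ) (B := ↥L) (C := ↥K) (D := ℂ)).symm ⟨f, g1⟩ b).re / 4
        = (f bL).re / 4
      congr 2
      show g1 b = f bL
      rw [← hb']
      exact @AlgHom.commutes ↥L ↥K ℂ _ _ _ _ f.toRingHom.toAlgebra g1 bL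
    calc (∏ g1 : @AlgHom ↥L ↥K ℂ _ _ _ _ f.toRingHom.toAlgebra,
            u ((algHomEquivSigma).symm ⟨f, g1⟩))
        = ∏ _g1 : @AlgHom ↥L ↥K ℂ _ _ _ _ f.toRingHom.toAlgebra, ((f bL).re / 4) :=
          Finset.prod_congr rfl fun g1 _ => hterm g1
      _ = ((f bL).re / 4) ^ r := by
          rw [Finset.prod_const, Finset.card_univ]
          congr 1
          rw [← hrk]
          letI := f.toRingHom.toAlgebra (R := ↥L) (S := ℂ)
          convert AlgHom.card ↥L ↥K ℂ
  -- the finprod over real embeddings of L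
  have hfin : ∏ᶠ τ : ↥L →+* ℝ, ((τ bL / 4) ^ r) = ∏ f : ↥L →ₐ[ℚ] ℂ, ((f bL).re / 4) ^ r := by
    rw [finprod_eq_prod_of_fintype]
    refine Fintype.prod_equiv e2 _ _ fun τ => ?_
    congr 2
  -- positivity facts
  have hπp : 0 < π / p := div_pos Real.pi_pos (by positivity)
  have hπq : 0 < π / q := div_pos Real.pi_pos (by positivity)
  have hπp' : π / p < π := div_lt_self Real.pi_pos (by exact_mod_cast (by omega : 1 < p))
  have hπq' : π / q < π := div_lt_self Real.pi_pos (by exact_mod_cast (by omega : 1 < q))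
  have hsp : 0 < Real.sin (π / p) := Real.sin_pos_of_pos_of_lt_pi hπp hπp'
  have hsq : 0 < Real.sin (π / q) := Real.sin_pos_of_pos_of_lt_pi hπq hπq'
  set B4 : ℝ := 4 * Real.sin (π / p) ^ 2 * Real.sin (π / q) ^ 2 with hB4def
  have hB4pos : 0 < B4 := by positivity
  -- values of u at ι and ι'
  have huι : u ι = B4 := by
    rw [hudef]
    show ((b : ℂ)).re / 4 = B4
    rw [hb, Complex.ofReal_re, hB4def]
    ring
  have huι' : u ι' = B4 := by
    rw [hudef]
    show ((starRingEnd ℂ) (b : ℂ)).re / 4 = B4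
    rw [hb, Complex.conj_ofReal, Complex.ofReal_re, hB4def]
    ring
  -- bounds for the real embeddings
  have hubound : ∀ σ : ↥K →ₐ[ℚ] ℂ, σ ≠ ι → σ ≠ ι' →
      ‖σ g‖ ≤ u σ ∧ 0 < u σ := by
    intro σ h1 h2
    rcases htri σ with h | h | h
    · exact absurd h h1
    · exact absurd h h2
    · set τ : ↥K →+* ℝ := myRealPart σ.toRingHom h with hτdef
      obtain ⟨hlo0, hhi0⟩ := hτ τ
      have hhi : (σ g).re < 0 := hhi0
      have hlo : -((σ b).re) / 4 < (σ g).re := hlo0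
      have habs : ‖σ g‖ = |(σ g).re| := by
        have : σ g = (((σ g).re : ℝ) : ℂ) := Complex.ext rfl (by rw [Complex.ofReal_im, h g])
        rw [this, Complex.norm_real, Real.norm_eq_abs, Complex.ofReal_re]
      constructor
      · rw [habs, hudef]
        have : |(σ g).re| = -(σ g).re := abs_of_neg hhi
        rw [this]
        linarith
      · rw [hudef]
        show 0 < (σ b).re / 4
        linarith
  -- assemble
  set C : ℝ := Real.cos (π / p) + Real.cos (π / q) with hCdef
  have hι'mem : ι' ∈ Finset.univ.erase ι :=
    Finset.mem_erase.mpr ⟨hιι'.symm, Finset.mem_univ _⟩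
  have hSne : ∀ σ ∈ (Finset.univ.erase ι).erase ι', σ ≠ ι ∧ σ ≠ ι' := by
    intro σ hσ
    rcases Finset.mem_erase.mp hσ with ⟨hne', hσ'⟩
    exact ⟨(Finset.mem_erase.mp hσ').1, hne'⟩
  have hsplitU : ∏ σ : ↥K →ₐ[ℚ] ℂ, u σ
      = u ι * (u ι' * ∏ σ ∈ (Finset.univ.erase ι).erase ι', u σ) := by
    conv_lhs => rw [← Finset.mul_prod_erase Finset.univ u (Finset.mem_univ ι),
      ← Finset.mul_prod_erase _ u hι'mem]
  have hsplitA : ∏ σ : ↥K →ₐ[ℚ] ℂ, ‖σ g‖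
      = ‖ι g‖ * (‖ι' g‖
        * ∏ σ ∈ (Finset.univ.erase ι).erase ι', ‖σ g‖) := by
    conv_lhs => rw [← Finset.mul_prod_erase Finset.univ (fun σ => ‖σ g‖)
      (Finset.mem_univ ι), ← Finset.mul_prod_erase _ _ hι'mem]
  set P : ℝ := ∏ σ ∈ (Finset.univ.erase ι).erase ι', u σ with hPdef
  set A : ℝ := ∏ σ ∈ (Finset.univ.erase ι).erase ι', ‖σ g‖ with hAdef
  have hPpos : 0 ≤ P := Finset.prod_nonneg fun σ hσ =>
    le_of_lt (hubound σ (hSne σ hσ).1 (hSne σ hσ).2).2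
  have hAP : A ≤ P := Finset.prod_le_prod (fun σ _ => norm_nonneg _)
    (fun σ hσ => (hubound σ (hSne σ hσ).1 (hSne σ hσ).2).1)
  have hA0 : 0 ≤ A := Finset.prod_nonneg fun σ _ => norm_nonneg _
  have hιg : ‖ι g‖ = ‖γ‖ := by rw [hιapp]
  have hι'g : ‖ι' g‖ = ‖γ‖ := by rw [hι'app]; exact Complex.norm_conj _
  -- the absolute value of the norm as a product
  set n : ℚ := Algebra.norm ℚ g with hndef
  have habsn : ((|n| : ℚ) : ℝ) = ∏ σ : ↥K →ₐ[ℚ] ℂ, ‖σ g‖ := by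
    have h0 := Algebra.norm_eq_prod_embeddings ℚ ℂ g
    calc ((|n| : ℚ) : ℝ) = |((n : ℚ) : ℝ)| := by push_cast; ring
      _ = ‖(((n : ℝ) : ℝ) : ℂ)‖ := by rw [Complex.norm_real, Real.norm_eq_abs]
      _ = ‖algebraMap ℚ ℂ n‖ := by rw [eq_ratCast (algebraMap ℚ ℂ) n, Complex.ofReal_ratCast]
      _ = ‖∏ σ : ↥K →ₐ[ℚ] ℂ, σ g‖ := by rw [h0]
      _ = ∏ σ : ↥K →ₐ[ℚ] ℂ, ‖σ g‖ := norm_prod _ _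
  have hγ0 : 0 ≤ ‖γ‖ := norm_nonneg _
  have hC2 : 0 ≤ 4 * C ^ 2 := le_trans hγ0 hbound
  clear_value P A n C B4
  -- final computation
  rw [habsn, hsplitA, hιg, hι'g]
  have hRHS : 16 * C ^ 4 * (B4⁻¹) ^ 2 * ∏ᶠ σ : (↥L →+* ℝ), (σ bL / 4) ^ r
      = 16 * C ^ 4 * P := by
    rw [hfin, ← key, hsplitU, huι, huι']
    have hne : B4 ≠ 0 := ne_of_gt hB4pos
    field_simp
  calc ‖γ‖ * (‖γ‖ * A)
      ≤ (4 * C ^ 2) * ((4 * C ^ 2) * P) := by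
        refine mul_le_mul hbound ?_ (mul_nonneg hγ0 hA0) hC2
        exact mul_le_mul hbound hAP hA0 hC2
    _ = 16 * C ^ 4 * P := by ring
    _ = 16 * C ^ 4 * (B4⁻¹) ^ 2 * ∏ᶠ σ : (↥L →+* ℝ), (σ bL / 4) ^ r := hRHS.symm
end

section
/- Let p, q ≥ 6 be integers and L = ℚ(cos(2π/p), cos(2π/q)) ⊆ ℝ, with μ = [L : ℚ]. Let γ ∈ ℂ∖ℝ be an algebraic integer such that the field K = ℚ(γ) ⊆ ℂ contains L, with [K : L] = r; assume every field embedding K → ℂ other than the inclusion K ⊆ ℂ and its complex conjugate has image contained in ℝ; assume |γ| ≤ 4(cos(π/p) + cos(π/q))²; and assume every field embedding τ : K → ℝ satisfies −τ(β₁β₂)/4 < τ(γ) < 0, where β₁β₂ = 16 sin²(π/p) sin²(π/q) is viewed as an element of L ⊆ K. Then r·μ ≤ 4·log[(cos(π/p) + cos(π/q))/(sin(π/p) sin(π/q))] / log(4/δ_{p,q}), where δ_{p,q} = δ_p^{2/φ(p)} · δ_q^{2/φ(q)}. -/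
open scoped Real Classical

/-- δ_n = m if n is a power of a prime m, and δ_n = 1 otherwise. -/
noncomputable def deltaFn (n : ℕ) : ℕ := if IsPrimePow n then n.minFac else 1

namespace Stmt9Aux

open IntermediateField Module Polynomial

lemma finrank_ext {F M : IntermediateField ℚ ℂ} (h : F ≤ M) [FiniteDimensional ℚ ↥M] :
    finrank ℚ ↥F * finrank ↥F ↥(extendScalars h) = finrank ℚ ↥M := by
  haveI : FiniteDimensional ℚ ↥(extendScalars h) := ‹FiniteDimensional ℚ ↥M›
  haveI : FiniteDimensional ↥F ↥(extendScalars h) := FiniteDimensional.right ℚ _ _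
  exact Module.finrank_mul_finrank ℚ ↥F ↥(extendScalars h)

lemma norm_tower {F M : IntermediateField ℚ ℂ} (h : F ≤ M) [FiniteDimensional ℚ ↥M] (x : ↥F) :
    Algebra.norm ℚ (IntermediateField.inclusion h x) =
      Algebra.norm ℚ x ^ finrank ↥F ↥(extendScalars h) := by
  haveI : FiniteDimensional ℚ ↥(extendScalars h) := ‹FiniteDimensional ℚ ↥M›
  haveI : FiniteDimensional ↥F ↥(extendScalars h) := FiniteDimensional.right ℚ _ _
  have h1 : Algebra.norm ℚ (Algebra.norm ↥F (algebraMap ↥F ↥(extendScalars h) x)) =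
      Algebra.norm ℚ (algebraMap ↥F ↥(extendScalars h) x) := Algebra.norm_norm ..
  rw [Algebra.norm_algebraMap, map_pow] at h1
  exact h1.symm

lemma cyclo_block (p : ℕ) (hp : 6 ≤ p) :
    ∃ (Qp : IntermediateField ℚ ℂ) (xp : ↥Qp),
      FiniteDimensional ℚ ↥Qp ∧ finrank ℚ ↥Qp = Nat.totient p ∧
      (xp : ℂ) = ((2 : ℝ) - 2 * Real.cos (2 * π / p) : ℝ) ∧
      Algebra.norm ℚ xp = (deltaFn p : ℚ) ^ 2 := by
  have hp0 : p ≠ 0 := by omega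
  have hp2 : 2 < p := by omega
  haveI : NeZero p := ⟨hp0⟩
  set ζ : ℂ := Complex.exp (2 * π * Complex.I / p) with hζdef
  have hζ : IsPrimitiveRoot ζ p := Complex.isPrimitiveRoot_exp p hp0
  have hζint : IsIntegral ℚ ζ := (hζ.isIntegral (by omega)).tower_top
  haveI fd : FiniteDimensional ℚ ℚ⟮ζ⟯ := adjoin.finiteDimensional hζint
  set n : ℕ+ := ⟨p, by omega⟩ with hn
  have hnn : (n : ℕ) = p := rfl
  have H : ℚ⟮ζ⟯.toSubalgebra = Algebra.adjoin ℚ {ζ} :=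
    adjoin_simple_toSubalgebra_of_isAlgebraic hζint.isAlgebraic
  haveI hcyc : IsCyclotomicExtension {(n : ℕ)} ℚ ℚ⟮ζ⟯ := by
    refine IsCyclotomicExtension.equiv _ _ _ (h := ?_) (.refl : ℚ⟮ζ⟯.toSubalgebra ≃ₐ[ℚ] _)
    rw [H]
    have hζn : IsPrimitiveRoot ζ (n : ℕ) := hζ
    exact hζn.adjoin_isCyclotomicExtension ℚ
  set g : ℚ⟮ζ⟯ := AdjoinSimple.gen ℚ ζ with hg
  have hgen : IsPrimitiveRoot g p := by
    rw [← IsPrimitiveRoot.coe_submonoidClass_iff]; exact hζ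
  have hgen' : IsPrimitiveRoot g (n : ℕ) := hgen
  have hgeninv : IsPrimitiveRoot g⁻¹ (n : ℕ) := hgen'.inv
  have hirr : Irreducible (cyclotomic (n : ℕ) ℚ) := cyclotomic.irreducible_rat n.pos
  have hfin : finrank ℚ ℚ⟮ζ⟯ = Nat.totient p := by
    haveI : IsCyclotomicExtension {p} ℚ ℚ⟮ζ⟯ := hcyc
    exact IsCyclotomicExtension.finrank ℚ⟮ζ⟯ hirr
  have hne2 : n ≠ 2 := by
    intro h
    have h2 : (n : ℕ) = 2 := by rw [h]; rfl
    rw [hnn] at h2; omega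
  have hnorm1 : Algebra.norm ℚ (g - 1) = (deltaFn p : ℚ) := by
    by_cases hpp : IsPrimePow p
    · rw [hgen'.sub_one_norm_isPrimePow hpp hirr (by rw [hnn]; omega)]
      simp [deltaFn, hpp, hnn]
    · rw [hgen'.sub_one_norm_eq_eval_cyclotomic (by exact_mod_cast hp2) hirr]
      rw [eval_one_cyclotomic_not_prime_pow (fun {m} hm k hmk => by
        rw [hnn] at hmk
        rcases k with _ | k
        · simp at hmk; omega
        · exact hpp ⟨m, k + 1, hm.prime, k.succ_pos, hmk⟩)]
      simp [deltaFn, hpp]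
  have hnorm2 : Algebra.norm ℚ (g⁻¹ - 1) = (deltaFn p : ℚ) := by
    by_cases hpp : IsPrimePow p
    · rw [hgeninv.sub_one_norm_isPrimePow hpp hirr (by rw [hnn]; omega)]
      simp [deltaFn, hpp, hnn]
    · rw [hgeninv.sub_one_norm_eq_eval_cyclotomic (by exact_mod_cast hp2) hirr]
      rw [eval_one_cyclotomic_not_prime_pow (fun {m} hm k hmk => by
        rw [hnn] at hmk
        rcases k with _ | k
        · simp at hmk; omega
        · exact hpp ⟨m, k + 1, hm.prime, k.succ_pos, hmk⟩)]
      simp [deltaFn, hpp]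
  have hnegone : Algebra.norm ℚ (-1 : ℚ⟮ζ⟯) = 1 := by
    have := Algebra.norm_algebraMap (S := ℚ⟮ζ⟯) (-1 : ℚ)
    rw [map_neg, map_one] at this
    rw [this, hfin]
    exact (Nat.totient_even hp2).neg_one_pow
  refine ⟨ℚ⟮ζ⟯, (1 - g) * (1 - g⁻¹), fd, hfin, ?_, ?_⟩
  · have hζne : ζ ≠ 0 := Complex.exp_ne_zero _
    have hcoeg : (g : ℂ) = ζ := rfl
    have hcoeginv : ((g⁻¹ : ℚ⟮ζ⟯) : ℂ) = ζ⁻¹ := by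
      push_cast; rfl
    push_cast [hcoeg, hcoeginv]
    have hzform : ζ = Complex.exp (((2 * π / p : ℝ) : ℂ) * Complex.I) := by
      rw [hζdef]; congr 1; push_cast; ring
    have hzinv : ζ⁻¹ = Complex.exp (-(((2 * π / p : ℝ) : ℂ) * Complex.I)) := by
      rw [hzform, ← Complex.exp_neg]
    have hsum : ζ + ζ⁻¹ = 2 * ((Real.cos (2 * π / p) : ℝ) : ℂ) := by
      rw [hzinv, hzform, ← neg_mul, Complex.exp_mul_I, Complex.exp_mul_I]
      rw [Complex.cos_neg, Complex.sin_neg, Complex.ofReal_cos]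
      ring
    have hprod : (1 - ζ) * (1 - ζ⁻¹) = 2 - (ζ + ζ⁻¹) := by
      field_simp
      ring
    rw [hprod, hsum]
    push_cast
    ring
  · rw [map_mul]
    have e1 : (1 - g) = (-1) * (g - 1) := by ring
    have e2 : (1 - g⁻¹) = (-1) * (g⁻¹ - 1) := by ring
    rw [e1, e2, map_mul, map_mul, hnegone, hnorm1, hnorm2]
    ring


lemma sq_lt_two_pow (n : ℕ) (h : 7 ≤ n) : n ^ 2 < 2 ^ (n - 1) := by
  induction n with
  | zero => omega
  | succ m ih =>
    rcases Nat.lt_or_ge m 7 with hm | hm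
    · interval_cases m <;> simp_all <;> norm_num
    · have h1 := ih (by omega)
      have h2 : 2 * m + 1 ≤ m ^ 2 := by nlinarith
      have : (m + 1) ^ 2 ≤ 2 * m ^ 2 := by nlinarith
      calc (m + 1) ^ 2 ≤ 2 * m ^ 2 := this
        _ < 2 * 2 ^ (m - 1) := by omega
        _ = 2 ^ (m + 1 - 1) := by
            rw [show m + 1 - 1 = (m - 1) + 1 by omega]; ring


lemma delta_sq_lt (p : ℕ) (hp : 6 ≤ p) : (deltaFn p) ^ 2 < 2 ^ (Nat.totient p) := by
  have htp : 1 ≤ Nat.totient p := Nat.totient_pos.2 (by omega)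
  by_cases hpp : IsPrimePow p
  · rw [deltaFn, if_pos hpp]
    obtain ⟨m, k, hm, hk, rfl⟩ := hpp
    have hmp : m.Prime := hm.nat_prime
    have hminfac : (m ^ k).minFac = m := Nat.Prime.pow_minFac hmp (by omega)
    rw [hminfac, Nat.totient_prime_pow hmp hk]
    rcases Nat.lt_or_ge m 3 with h2 | h3
    · -- m = 2, k ≥ 3
      have hm2 : m = 2 := by have := hmp.two_le; omega
      subst hm2
      have hk3 : 3 ≤ k := by
        by_contra hc
        interval_cases k <;> omega
      have : 4 ≤ 2 ^ (k - 1) := by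
        calc 4 = 2 ^ 2 := by norm_num
        _ ≤ 2 ^ (k - 1) := Nat.pow_le_pow_right (by norm_num) (by omega)
      calc 2 ^ 2 = 4 := by norm_num
        _ < 2 ^ 4 := by norm_num
        _ ≤ 2 ^ (2 ^ (k - 1) * (2 - 1)) := Nat.pow_le_pow_right (by norm_num) (by omega)
    · rcases Nat.lt_or_ge k 2 with hk1 | hk2
      · -- k = 1, p = m ≥ 7 prime
        have hk1' : k = 1 := by omega
        subst hk1'
        have hm7 : 7 ≤ m := by
          have h6 : 6 ≤ m := by simpa using hp
          have : m ≠ 6 := by intro h; rw [h] at hmp; norm_num at hmp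
          omega
        have := sq_lt_two_pow m hm7
        simpa using this
      · -- k ≥ 2, m ≥ 3
        have h1 : m ^ 2 < 2 ^ (2 * m) := by
          have := (Nat.lt_two_pow_self : m < 2 ^ m)
          calc m ^ 2 = m * m := sq m
            _ < 2 ^ m * 2 ^ m := Nat.mul_lt_mul_of_lt_of_lt this this
            _ = 2 ^ (2 * m) := by rw [← pow_add]; ring_nf
        have h2 : 2 * m ≤ m ^ (k - 1) * (m - 1) := by
          have : m ≤ m ^ (k - 1) := by
            calc m = m ^ 1 := (pow_one m).symm
              _ ≤ m ^ (k - 1) := Nat.pow_le_pow_right (by omega) (by omega)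
          calc 2 * m ≤ (m - 1) * m := Nat.mul_le_mul_right m (by omega)
            _ ≤ (m - 1) * m ^ (k - 1) := Nat.mul_le_mul_left _ this
            _ = m ^ (k - 1) * (m - 1) := by ring
        exact lt_of_lt_of_le h1 (Nat.pow_le_pow_right (by norm_num) h2)
  · rw [deltaFn, if_neg hpp]
    calc 1 ^ 2 = 1 := one_pow 2
      _ < 2 ^ 1 := by norm_num
      _ ≤ 2 ^ Nat.totient p := Nat.pow_le_pow_right (by norm_num) htp


lemma one_le_deltaFn (p : ℕ) : 1 ≤ deltaFn p := by
  unfold deltaFn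
  split
  · exact Nat.minFac_pos _
  · exact le_refl 1

lemma one_le_deltaR (p : ℕ) : (1 : ℝ) ≤ (deltaFn p : ℝ) ^ ((2 : ℝ) / (Nat.totient p : ℝ)) := by
  apply Real.one_le_rpow
  · exact_mod_cast one_le_deltaFn p
  · exact div_nonneg (by norm_num) (Nat.cast_nonneg _)

lemma deltaR_lt_two (p : ℕ) (hp : 6 ≤ p) :
    (deltaFn p : ℝ) ^ ((2 : ℝ) / (Nat.totient p : ℝ)) < 2 := by
  have htp : 0 < Nat.totient p := Nat.totient_pos.2 (by omega)
  have hA : (0 : ℝ) < (deltaFn p : ℝ) := by exact_mod_cast one_le_deltaFn p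
  by_contra hc
  push_neg at hc
  have h1 : ((deltaFn p : ℝ) ^ ((2 : ℝ) / (Nat.totient p : ℝ))) ^ (Nat.totient p) =
      (deltaFn p : ℝ) ^ (2 : ℕ) := by
    rw [← Real.rpow_natCast ((deltaFn p : ℝ) ^ ((2:ℝ)/(Nat.totient p : ℝ))) (Nat.totient p),
      ← Real.rpow_mul hA.le, div_mul_cancel₀, Real.rpow_two, sq]
    exact Nat.cast_ne_zero.2 htp.ne'
  have h2 : (2 : ℝ) ^ (Nat.totient p) ≤ (deltaFn p : ℝ) ^ (2 : ℕ) := by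
    rw [← h1]
    exact pow_le_pow_left₀ (by norm_num) hc _
  have h3 := delta_sq_lt p hp
  have h3' : ((deltaFn p : ℝ)) ^ (2:ℕ) < (2:ℝ) ^ (Nat.totient p) := by exact_mod_cast h3
  linarith

/-- turn a real-valued complex embedding into a real embedding -/
noncomputable def realPart {A : Type*} [Ring A] (σ : A →+* ℂ) (h : ∀ x, (σ x).im = 0) :
    A →+* ℝ where
  toFun x := (σ x).re
  map_one' := by simp
  map_mul' x y := by
    show (σ (x * y)).re = (σ x).re * (σ y).re
    rw [map_mul, Complex.mul_re, h x, h y]; ring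
  map_zero' := by simp
  map_add' x y := by
    show (σ (x + y)).re = (σ x).re + (σ y).re
    rw [map_add, Complex.add_re]

lemma realPart_spec {A : Type*} [Ring A] (σ : A →+* ℂ) (h : ∀ x, (σ x).im = 0) (x : A) :
    σ x = ((realPart σ h x : ℝ) : ℂ) := by
  apply Complex.ext
  · rfl
  · rw [h x]; simp

end Stmt9Aux

open Stmt9Aux IntermediateField Module

set_option maxHeartbeats 2000000 in
/-- degree bound r·μ ≤ 4·log[(cos(π/p)+cos(π/q))/(sin(π/p)sin(π/q))]/log(4/δ_{p,q}). -/
theorem stmt_9 (p q : ℕ) (hp : 6 ≤ p) (hq : 6 ≤ q) (r : ℕ)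
    (γ : ℂ) (hγnotreal : γ.im ≠ 0) (hγint : IsIntegral ℤ γ)
    (L K : IntermediateField ℚ ℂ)
    (hL : L = IntermediateField.adjoin ℚ
      {((Real.cos (2 * π / p) : ℝ) : ℂ), ((Real.cos (2 * π / q) : ℝ) : ℂ)})
    (hK : K = IntermediateField.adjoin ℚ {γ})
    (hγK : γ ∈ K)
    (hLK : L ≤ K)
    (μ : ℕ) (hμ : Module.finrank ℚ ↥L = μ)
    (hr : Module.finrank ↥L ↥(IntermediateField.extendScalars hLK) = r)
    (hembs : ∀ φ : ↥K →+* ℂ, φ ≠ algebraMap ↥K ℂ →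
      φ ≠ (starRingEnd ℂ).comp (algebraMap ↥K ℂ) → ∀ x : ↥K, (φ x).im = 0)
    (hbound : ‖γ‖ ≤ 4 * (Real.cos (π / p) + Real.cos (π / q)) ^ 2)
    (b : ↥K) (hb : (b : ℂ) = ((16 * Real.sin (π / p) ^ 2 * Real.sin (π / q) ^ 2 : ℝ) : ℂ))
    (hτ : ∀ τ : ↥K →+* ℝ, -(τ b) / 4 < τ ⟨γ, hγK⟩ ∧ τ ⟨γ, hγK⟩ < 0) :
    (r * μ : ℝ) ≤ 4 * Real.log ((Real.cos (π / p) + Real.cos (π / q)) /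
        (Real.sin (π / p) * Real.sin (π / q))) /
      Real.log (4 / ((deltaFn p : ℝ) ^ ((2 : ℝ) / (Nat.totient p : ℝ)) *
        (deltaFn q : ℝ) ^ ((2 : ℝ) / (Nat.totient q : ℝ)))) := by
  classical
  have pi_pos := Real.pi_pos
  set Δ : ℝ := (deltaFn p : ℝ) ^ ((2 : ℝ) / (Nat.totient p : ℝ)) *
        (deltaFn q : ℝ) ^ ((2 : ℝ) / (Nat.totient q : ℝ)) with hΔdef
  set cc : ℝ := Real.cos (π / p) + Real.cos (π / q) with hcc
  set sp : ℝ := Real.sin (π / p) with hsp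
  set sq : ℝ := Real.sin (π / q) with hsq
  have hp6 : (6:ℝ) ≤ (p:ℝ) := by exact_mod_cast hp
  have hq6 : (6:ℝ) ≤ (q:ℝ) := by exact_mod_cast hq
  have hp0 : (0:ℝ) < p := by linarith
  have hq0 : (0:ℝ) < q := by linarith
  have hsp0 : 0 < sp := Real.sin_pos_of_pos_of_lt_pi (by positivity)
    (by rw [div_lt_iff₀ hp0]; nlinarith)
  have hsq0 : 0 < sq := Real.sin_pos_of_pos_of_lt_pi (by positivity)
    (by rw [div_lt_iff₀ hq0]; nlinarith)
  have hcp0 : 0 < Real.cos (π / p) := by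
    apply Real.cos_pos_of_mem_Ioo
    constructor
    · have h0 : (0:ℝ) < π / p := by positivity
      linarith
    · rw [div_lt_div_iff₀ hp0 (by norm_num : (0:ℝ) < 2)]; nlinarith
  have hcq0 : 0 < Real.cos (π / q) := by
    apply Real.cos_pos_of_mem_Ioo
    constructor
    · have h0 : (0:ℝ) < π / q := by positivity
      linarith
    · rw [div_lt_div_iff₀ hq0 (by norm_num : (0:ℝ) < 2)]; nlinarith
  have hcc0 : 0 < cc := by rw [hcc]; linarith
  -- finite dimensionality of K
  have hγQ : IsIntegral ℚ γ := hγint.tower_top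
  haveI hKfd : FiniteDimensional ℚ ↥K := by
    rw [hK]
    exact IntermediateField.adjoin.finiteDimensional hγQ
  set n : ℕ := finrank ℚ ↥K with hn
  have hnrμ : μ * r = n := by rw [← hμ, ← hr]; exact finrank_ext hLK
  -- element γK
  set γK : ↥K := ⟨γ, hγK⟩ with hγKdef
  have hγK0 : γK ≠ 0 := by
    intro h
    apply hγnotreal
    have : (γK : ℂ) = 0 := by rw [h]; rfl
    rw [show (γK : ℂ) = γ from rfl] at this
    rw [this]; rfl
  have hγKint : IsIntegral ℤ γK := by
    have hinj : Function.Injective (algebraMap ↥K ℂ) := (algebraMap ↥K ℂ).injective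
    rw [← isIntegral_algebraMap_iff hinj]
    exact hγint
  -- norm of γK
  set NB : ℚ := Algebra.norm ℚ γK with hNB
  have hNint : IsIntegral ℤ NB := Algebra.isIntegral_norm ℚ hγKint
  have hN0 : NB ≠ 0 := by
    rw [hNB]
    exact (Algebra.norm_ne_zero_iff).2 hγK0
  have h1N : (1:ℝ) ≤ |(NB : ℝ)| := by
    obtain ⟨m, hm⟩ := IsIntegrallyClosed.isIntegral_iff.mp hNint
    have hm0 : m ≠ 0 := by rintro rfl; simp at hm; exact hN0 hm.symm
    have : (1:ℤ) ≤ |m| := Int.one_le_abs (by exact_mod_cast hm0)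
    have hmr : (NB : ℝ) = (m : ℝ) := by rw [← hm, eq_intCast]; norm_cast
    rw [hmr]
    exact_mod_cast this
  -- embeddings
  have hcard : Fintype.card (↥K →ₐ[ℚ] ℂ) = n := AlgHom.card ℚ ↥K ℂ
  set σ0 : ↥K →ₐ[ℚ] ℂ := K.val with hσ0
  set σ1 : ↥K →ₐ[ℚ] ℂ := ((starRingEnd ℂ).comp (K.val : ↥K →+* ℂ)).toRatAlgHom with hσ1
  have hσ1app : ∀ x : ↥K, σ1 x = (starRingEnd ℂ) (x : ℂ) := fun x => rfl
  have hσ0app : ∀ x : ↥K, σ0 x = (x : ℂ) := fun x => rfl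
  have hσne : σ1 ≠ σ0 := by
    intro h
    apply hγnotreal
    have h2 := DFunLike.congr_fun h γK
    rw [hσ1app, hσ0app] at h2
    exact (Complex.conj_eq_iff_im).1 h2
  set S : Finset (↥K →ₐ[ℚ] ℂ) := (Finset.univ.erase σ0).erase σ1 with hS
  have hσ1mem : σ1 ∈ Finset.univ.erase σ0 := Finset.mem_erase.2 ⟨hσne, Finset.mem_univ _⟩
  have hn2 : 2 ≤ n := by
    have h2 := Fintype.one_lt_card_iff_nontrivial.2 ⟨⟨σ1, σ0, hσne⟩⟩
    omega
  have hcardS : S.card = n - 2 := by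
    rw [hS, Finset.card_erase_of_mem hσ1mem, Finset.card_erase_of_mem (Finset.mem_univ σ0),
      Finset.card_univ, hcard]
    omega
  -- real embeddings
  have hSreal : ∀ σ ∈ S, ∀ x : ↥K, ((σ : ↥K →ₐ[ℚ] ℂ) x).im = 0 := by
    intro σ hσ x
    have h1 := (Finset.mem_erase.1 hσ).1
    have h0 := (Finset.mem_erase.1 (Finset.mem_erase.1 hσ).2).1
    refine hembs σ.toRingHom ?_ ?_ x
    · intro h
      exact h0 (AlgHom.ext fun y => by
        rw [show σ y = σ.toRingHom y from rfl, h]; rfl)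
    · intro h
      exact h1 (AlgHom.ext fun y => by
        rw [show σ y = σ.toRingHom y from rfl, h]; rfl)
  -- key pointwise bounds on S
  have hσS : ∀ σ ∈ S, ‖σ γK‖ ≤ (σ b).re / 4 ∧ 0 < (σ b).re ∧
      σ b = (((σ b).re : ℝ) : ℂ) := by
    intro σ hσ
    have hre := hSreal σ hσ
    have h1 : σ γK = ((realPart σ.toRingHom hre γK : ℝ) : ℂ) := realPart_spec _ hre γK
    have h2 : σ b = ((realPart σ.toRingHom hre b : ℝ) : ℂ) := realPart_spec _ hre b
    have hrb : (σ b).re = realPart σ.toRingHom hre b := rfl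
    obtain ⟨hb1, hb2⟩ := hτ (realPart σ.toRingHom hre)
    refine ⟨?_, ?_, ?_⟩
    · rw [h1, Complex.norm_real, Real.norm_eq_abs, abs_of_neg hb2, hrb]
      linarith
    · rw [hrb]; linarith
    · exact h2
  -- product of absolute values of γ conjugates
  have hprodγ : algebraMap ℚ ℂ NB = ∏ σ : ↥K →ₐ[ℚ] ℂ, σ γK :=
    Algebra.norm_eq_prod_embeddings ℚ ℂ γK
  have habs : |(NB : ℝ)| = ∏ σ : ↥K →ₐ[ℚ] ℂ, ‖σ γK‖ := by
    rw [← Complex.norm_prod, ← hprodγ]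
    rw [show algebraMap ℚ ℂ NB = ((NB : ℝ) : ℂ) by push_cast; rfl]
    exact (Complex.norm_real _).symm
  have hsplitγ : ∏ σ : ↥K →ₐ[ℚ] ℂ, ‖σ γK‖ =
      ‖γ‖ * (‖γ‖ * ∏ σ ∈ S, ‖σ γK‖) := by
    rw [← Finset.mul_prod_erase _ _ (Finset.mem_univ σ0),
      ← Finset.mul_prod_erase _ _ hσ1mem]
    congr 2
    · rw [hσ1app]
      exact Complex.norm_conj γ
  set g : (↥K →ₐ[ℚ] ℂ) → ℝ := fun σ => (σ b).re with hg
  set Pg : ℝ := ∏ σ ∈ S, g σ with hPg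
  have hPg0 : 0 < Pg := Finset.prod_pos fun σ hσ => (hσS σ hσ).2.1
  have hProdle : ∏ σ ∈ S, ‖σ γK‖ ≤ Pg / 4 ^ (n - 2) := by
    have h1 : ∏ σ ∈ S, ‖σ γK‖ ≤ ∏ σ ∈ S, (g σ / 4) :=
      Finset.prod_le_prod (fun σ _ => norm_nonneg _) (fun σ hσ => (hσS σ hσ).1)
    have h2 : ∏ σ ∈ S, (g σ / 4) = Pg / 4 ^ (n - 2) := by
      rw [Finset.prod_div_distrib, Finset.prod_const, hcardS]
    linarith
  have key1 : (1:ℝ) ≤ ‖γ‖ ^ 2 * (Pg / 4 ^ (n - 2)) := by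
    calc (1:ℝ) ≤ |(NB : ℝ)| := h1N
      _ = ‖γ‖ * (‖γ‖ * ∏ σ ∈ S, ‖σ γK‖) := by
          rw [habs, hsplitγ]
      _ ≤ ‖γ‖ * (‖γ‖ * (Pg / 4 ^ (n - 2))) := by
          have habs0 : 0 ≤ ‖γ‖ := norm_nonneg _
          exact mul_le_mul_of_nonneg_left
            (mul_le_mul_of_nonneg_left hProdle habs0) habs0
      _ = ‖γ‖ ^ 2 * (Pg / 4 ^ (n - 2)) := by ring
  -- norm of b
  set Nb : ℚ := Algebra.norm ℚ b with hNbdef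
  set bR : ℝ := 16 * sp ^ 2 * sq ^ 2 with hbR
  have hbR0 : 0 < bR := by positivity
  have hprodb : algebraMap ℚ ℂ Nb = ∏ σ : ↥K →ₐ[ℚ] ℂ, σ b :=
    Algebra.norm_eq_prod_embeddings ℚ ℂ b
  have hsplitb : ∏ σ : ↥K →ₐ[ℚ] ℂ, σ b = ((bR : ℝ) : ℂ) * (((bR : ℝ) : ℂ) * ((Pg : ℝ) : ℂ)) := by
    have e0 : σ0 b = ((bR : ℝ) : ℂ) := by rw [hσ0app, hb]
    have e1 : σ1 b = ((bR : ℝ) : ℂ) := by rw [hσ1app, hb]; exact Complex.conj_ofReal _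
    have e2 : ∏ σ ∈ S, σ b = ((Pg : ℝ) : ℂ) := by
      rw [hPg, Complex.ofReal_prod]
      exact Finset.prod_congr rfl fun σ hσ => (hσS σ hσ).2.2
    rw [← Finset.mul_prod_erase _ _ (Finset.mem_univ σ0),
      ← Finset.mul_prod_erase _ _ hσ1mem, e0, e1]
    rw [show ((Finset.univ.erase σ0).erase σ1) = S from rfl, e2]
  have hNbR : (Nb : ℝ) = bR ^ 2 * Pg := by
    have h1 : ((Nb : ℝ) : ℂ) = ((bR ^ 2 * Pg : ℝ) : ℂ) := by
      rw [show ((Nb : ℝ) : ℂ) = algebraMap ℚ ℂ Nb by push_cast; rfl, hprodb, hsplitb]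
      push_cast
      ring
    exact_mod_cast h1
  have hNb0 : (0:ℝ) < (Nb : ℝ) := by rw [hNbR]; positivity
  -- cyclotomic fields
  obtain ⟨Qp, xp, fdp, hfrp, hxp, hNxp⟩ := cyclo_block p hp
  obtain ⟨Qq, xq, fdq, hfrq, hxq, hNxq⟩ := cyclo_block q hq
  haveI := fdp
  haveI := fdq
  set M : IntermediateField ℚ ℂ := K ⊔ Qp ⊔ Qq with hM
  haveI hMfd : FiniteDimensional ℚ ↥M := by
    haveI : FiniteDimensional ℚ ↥(K ⊔ Qp) := IntermediateField.finiteDimensional_sup K Qp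
    exact IntermediateField.finiteDimensional_sup _ _
  have hKM : K ≤ M := le_trans le_sup_left le_sup_left
  have hpM : Qp ≤ M := le_trans le_sup_right le_sup_left
  have hqM : Qq ≤ M := le_sup_right
  -- b = xp * xq in M
  have htrig : ∀ (m : ℕ), (6:ℝ) ≤ m → (2:ℝ) - 2 * Real.cos (2 * π / m) =
      4 * Real.sin (π / m) ^ 2 := by
    intro m hm
    have h1 : 2 * π / (m:ℝ) = 2 * (π / m) := by ring
    rw [h1, Real.cos_two_mul]
    have h2 := Real.sin_sq_add_cos_sq (π / m)
    nlinarith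
  have hbMeq : IntermediateField.inclusion hKM b =
      IntermediateField.inclusion hpM xp * IntermediateField.inclusion hqM xq := by
    apply Subtype.ext
    show (b : ℂ) = (xp : ℂ) * (xq : ℂ)
    rw [hb, hxp, hxq, ← Complex.ofReal_mul]
    congr 1
    rw [htrig p hp6, htrig q hq6]
    rw [← hsp, ← hsq]
    ring
  set sK : ℕ := finrank ↥K ↥(extendScalars hKM) with hsK
  set tp : ℕ := finrank ↥Qp ↥(extendScalars hpM) with htp
  set tq : ℕ := finrank ↥Qq ↥(extendScalars hqM) with htq
  have hnormM : Nb ^ sK = ((deltaFn p : ℚ) ^ 2) ^ tp * ((deltaFn q : ℚ) ^ 2) ^ tq := by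
    rw [hNbdef, ← norm_tower hKM b, hbMeq, map_mul, norm_tower hpM xp, norm_tower hqM xq,
      hNxp, hNxq]
  set nM : ℕ := finrank ℚ ↥M with hnM
  have hd1 : n * sK = nM := finrank_ext hKM
  have hd2 : Nat.totient p * tp = nM := by rw [← hfrp]; exact finrank_ext hpM
  have hd3 : Nat.totient q * tq = nM := by rw [← hfrq]; exact finrank_ext hqM
  have hnpos : 0 < n := Module.finrank_pos
  have hnMpos : 0 < nM := Module.finrank_pos
  have hsKpos : 0 < sK := by
    rcases Nat.eq_zero_or_pos sK with h | h
    · rw [h, mul_zero] at hd1; omega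
    · exact h
  have htotp : 0 < Nat.totient p := Nat.totient_pos.2 (by omega)
  have htotq : 0 < Nat.totient q := Nat.totient_pos.2 (by omega)
  -- Δ facts
  have hDp0 : (0:ℝ) < (deltaFn p : ℝ) := by exact_mod_cast one_le_deltaFn p
  have hDq0 : (0:ℝ) < (deltaFn q : ℝ) := by exact_mod_cast one_le_deltaFn q
  have hΔ0 : 0 < Δ := by
    rw [hΔdef]
    positivity
  -- D = Δ ^ n
  have hDeq : (Nb : ℝ) = Δ ^ n := by
    have base : (Nb : ℝ) ^ sK = (deltaFn p : ℝ) ^ (2 * tp) * (deltaFn q : ℝ) ^ (2 * tq) := by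
      have := congrArg (fun x : ℚ => (x : ℝ)) hnormM
      push_cast at this
      rw [this]
      rw [← pow_mul, ← pow_mul]
    have rhs : (Δ ^ n) ^ sK = (deltaFn p : ℝ) ^ (2 * tp) * (deltaFn q : ℝ) ^ (2 * tq) := by
      rw [← pow_mul, hd1, hΔdef, mul_pow]
      rw [← Real.rpow_natCast ((deltaFn p : ℝ) ^ ((2:ℝ)/(Nat.totient p : ℝ))) nM,
        ← Real.rpow_natCast ((deltaFn q : ℝ) ^ ((2:ℝ)/(Nat.totient q : ℝ))) nM,
        ← Real.rpow_mul hDp0.le, ← Real.rpow_mul hDq0.le]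
      have hep : (2:ℝ)/(Nat.totient p : ℝ) * nM = (2 * tp : ℕ) := by
        have : (nM : ℝ) = (Nat.totient p : ℝ) * tp := by exact_mod_cast hd2.symm
        rw [this]
        field_simp
        push_cast
        ring
      have heq : (2:ℝ)/(Nat.totient q : ℝ) * nM = (2 * tq : ℕ) := by
        have : (nM : ℝ) = (Nat.totient q : ℝ) * tq := by exact_mod_cast hd3.symm
        rw [this]
        field_simp
        push_cast
        ring
      rw [hep, heq, Real.rpow_natCast, Real.rpow_natCast]
    exact (pow_left_strictMonoOn₀ (n := sK) hsKpos.ne').injOn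
      (Set.mem_setOf.2 hNb0.le) (Set.mem_setOf.2 (pow_nonneg hΔ0.le n))
      (base.trans rhs.symm)
  -- final numeric assembly
  have hγabs2 : ‖γ‖ ^ 2 ≤ 16 * cc ^ 4 := by
    calc ‖γ‖ ^ 2 ≤ (4 * cc ^ 2) ^ 2 :=
          pow_le_pow_left₀ (norm_nonneg _) hbound 2
      _ = 16 * cc ^ 4 := by ring
  have key2 : (4:ℝ) ^ (n - 2) ≤ ‖γ‖ ^ 2 * Pg := by
    have h4 : (0:ℝ) < 4 ^ (n - 2) := by positivity
    have h' : (1:ℝ) ≤ ‖γ‖ ^ 2 * Pg / 4 ^ (n - 2) := by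
      rw [mul_div_assoc]; exact key1
    exact (one_le_div h4).mp h'
  have key3 : (4:ℝ) ^ n ≤ (cc / (sp * sq)) ^ 4 * Δ ^ n := by
    have hPgval : Pg = (Nb : ℝ) / bR ^ 2 := by
      rw [hNbR]; field_simp
    have h4n : (4:ℝ) ^ n = 16 * 4 ^ (n - 2) := by
      nth_rewrite 1 [show n = (n - 2) + 2 by omega]
      rw [pow_add]
      ring
    have step1 : (4:ℝ) ^ n ≤ 16 * (‖γ‖ ^ 2 * Pg) := by
      rw [h4n]
      have := key2
      nlinarith
    have step2 : 16 * (‖γ‖ ^ 2 * Pg) ≤ 16 * (16 * cc ^ 4 * Pg) := by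
      have h := mul_le_mul_of_nonneg_right hγabs2 hPg0.le
      linarith
    have step3 : 16 * (16 * cc ^ 4 * Pg) = (cc / (sp * sq)) ^ 4 * (Nb : ℝ) := by
      rw [hPgval, hbR]
      field_simp
    calc (4:ℝ) ^ n ≤ 16 * (‖γ‖ ^ 2 * Pg) := step1
      _ ≤ 16 * (16 * cc ^ 4 * Pg) := step2
      _ = (cc / (sp * sq)) ^ 4 * (Nb : ℝ) := step3
      _ = (cc / (sp * sq)) ^ 4 * Δ ^ n := by rw [hDeq]
  have key4 : (4 / Δ) ^ n ≤ (cc / (sp * sq)) ^ 4 := by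
    rw [div_pow, div_le_iff₀ (by positivity)]
    exact key3
  have hΔlt4 : Δ < 4 := by
    have h1 := deltaR_lt_two p hp
    have h2 := deltaR_lt_two q hq
    have h3 := one_le_deltaR p
    have h4 := one_le_deltaR q
    rw [hΔdef]
    nlinarith
  have hlogpos : 0 < Real.log (4 / Δ) := by
    apply Real.log_pos
    rw [lt_div_iff₀ hΔ0]
    linarith
  have hlog : (n:ℝ) * Real.log (4 / Δ) ≤ 4 * Real.log (cc / (sp * sq)) := by
    have h1 : Real.log ((4 / Δ) ^ n) ≤ Real.log ((cc / (sp * sq)) ^ 4) :=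
      Real.log_le_log (by positivity) key4
    rwa [Real.log_pow, Real.log_pow] at h1
    
  rw [le_div_iff₀ hlogpos]
  have hrμ : (r:ℝ) * μ = (n:ℝ) := by
    rw [← hnrμ]; push_cast; ring
  rw [hrμ]
  exact hlog
end

section
/- Let p, q ≥ 3 be integers, L = ℚ(cos(2π/p), cos(2π/q)) ⊆ ℝ with ring of integers R_L, and let γ ∈ ℂ∖ℝ be an algebraic integer with L ⊆ ℚ(γ) and [ℚ(γ) : L] = r. Let m(x) = xʳ + a_{r−1}x^{r−1} + ⋯ + a₀ ∈ R_L[x] be the minimal polynomial of γ over L, set b = 16cos²(π/p)cos²(π/q) ∈ R_L, c = 16cos²(π/p)cos²(π/q)·(4cos²(π/p) + 4cos²(π/q) − 4) ∈ R_L, and define M(y) = (y² − by + c)ʳ + a_{r−1}·b·(y² − by + c)^{r−1} + ⋯ + a₀·bʳ. Then the quadratic polynomial x² − bx + (c − bγ) has a root in ℚ(γ) if and only if M(y) factors over L into a product of two monic polynomials, each of degree r and with all coefficients in R_L. -/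
open scoped Real
open Polynomial

lemma int2cos (n : ℕ) (hn : n ≠ 0) : IsIntegral ℤ (2 * ((Real.cos (π / n) : ℝ) : ℂ)) := by
  set ζ : ℂ := Complex.exp ((π / n : ℝ) * Complex.I) with hζdef
  have hne : (n : ℂ) ≠ 0 := Nat.cast_ne_zero.mpr hn
  have hζpow : ζ ^ (2 * n) = 1 := by
    rw [hζdef, ← Complex.exp_nat_mul]
    have : (2 * n : ℕ) * (((π / n : ℝ) : ℂ) * Complex.I) = 2 * π * Complex.I := by
      push_cast
      field_simp
    rw [this, Complex.exp_two_pi_mul_I]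
  have hζint : IsIntegral ℤ ζ :=
    ⟨X ^ (2 * n) - 1, by
      simpa using monic_X_pow_sub_C (1 : ℤ) (by omega), by
      simp [hζpow]⟩
  have hζne : ζ ≠ 0 := Complex.exp_ne_zero _
  have hinv : ζ⁻¹ = ζ ^ (2 * n - 1) := by
    refine (eq_inv_of_mul_eq_one_left ?_).symm
    rw [← pow_succ, Nat.sub_add_cancel (by omega)]
    exact hζpow
  have hinvint : IsIntegral ℤ ζ⁻¹ := hinv ▸ hζint.pow _
  have hcos : 2 * ((Real.cos (π / n) : ℝ) : ℂ) = ζ + ζ⁻¹ := by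
    rw [Complex.ofReal_cos, Complex.cos, hζdef, ← Complex.exp_neg]
    push_cast
    ring
  rw [hcos]
  exact hζint.add hinvint

lemma quadInt {b c t w : ℂ} (hb : IsIntegral ℤ b) (hc : IsIntegral ℤ c)
    (ht : IsIntegral ℤ t) (hw : w ^ 2 - b * w + (c - b * t) = 0) : IsIntegral ℤ w := by
  let A := integralClosure ℤ ℂ
  let b' : A := ⟨b, hb⟩
  let c' : A := ⟨c, hc⟩
  let t' : A := ⟨t, ht⟩
  have hwA : IsIntegral A w := by
    refine ⟨X ^ 2 - C b' * X + C (c' - b' * t'), ?_, ?_⟩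
    · have : X ^ 2 - C b' * X + C (c' - b' * t') =
          X ^ 2 + (-(C b' * X) + C (c' - b' * t')) := by ring
      rw [this]
      apply monic_X_pow_add
      apply lt_of_le_of_lt (degree_add_le _ _)
      rw [max_lt_iff]
      constructor
      · rw [degree_neg]
        exact lt_of_le_of_lt (degree_C_mul_X_le _) (by decide)
      · exact lt_of_le_of_lt degree_C_le (by decide)
    · push_cast [aeval_def, eval₂_eq_eval_map]
      simp only [Polynomial.map_add, Polynomial.map_sub, Polynomial.map_mul, Polynomial.map_pow,
        map_C, map_X, eval_add, eval_sub, eval_mul, eval_pow, eval_C, eval_X]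
      show w ^ 2 - b * w + (c - b * t) = 0
      exact hw
  exact isIntegral_trans w hwA

lemma prodCoeffInt (s : Multiset ℂ) (hs : ∀ x ∈ s, IsIntegral ℤ x) (k : ℕ) :
    IsIntegral ℤ ((s.map fun x => Polynomial.X - Polynomial.C x).prod.coeff k) := by
  induction s using Multiset.induction generalizing k with
  | empty =>
    simp only [Multiset.map_zero, Multiset.prod_zero, coeff_one]
    split <;> [exact isIntegral_one; exact isIntegral_zero]
  | cons a s ih =>
    have ha : IsIntegral ℤ a := hs a (Multiset.mem_cons_self a s)
    have hs' : ∀ x ∈ s, IsIntegral ℤ x := fun x hx => hs x (Multiset.mem_cons_of_mem hx)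
    rw [Multiset.map_cons, Multiset.prod_cons, sub_mul, coeff_sub, coeff_C_mul]
    refine IsIntegral.sub ?_ (ha.mul (ih hs' k))
    cases k with
    | zero => simpa using isIntegral_zero
    | succ n => rw [coeff_X_mul]; exact ih hs' n

lemma monicQuad {R : Type*} [CommRing R] (b c : R) :
    (Polynomial.X ^ 2 - Polynomial.C b * Polynomial.X + Polynomial.C c).Monic := by
  have : X ^ 2 - C b * X + C c = X ^ 2 + (-(C b * X) + C c) := by ring
  rw [this]
  apply monic_X_pow_add
  apply lt_of_le_of_lt (degree_add_le _ _)
  rw [max_lt_iff]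
  constructor
  · rw [degree_neg]
    exact lt_of_le_of_lt (degree_C_mul_X_le _) (by decide)
  · exact lt_of_le_of_lt degree_C_le (by decide)

lemma natDegreeQuad {R : Type*} [CommRing R] [Nontrivial R] (b c : R) :
    (Polynomial.X ^ 2 - Polynomial.C b * Polynomial.X + Polynomial.C c).natDegree = 2 := by
  have : (X ^ 2 - C b * X + C c : R[X]) = C 1 * X ^ 2 + C (-b) * X + C c := by
    simp [map_neg]; ring
  rw [this]
  exact natDegree_quadratic one_ne_zero

set_option maxHeartbeats 1000000 in
set_option synthInstance.maxHeartbeats 400000 in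
/-- The quadratic x² − bx + (c − bγ) has a root in ℚ(γ) iff M(y) factors over L
into two monic degree-r factors with algebraic-integer coefficients. -/
theorem stmt_10 (p q : ℕ) (hp : 3 ≤ p) (hq : 3 ≤ q)
    (L : IntermediateField ℚ ℂ)
    (hL : L = IntermediateField.adjoin ℚ
      {((Real.cos (2 * π / p) : ℝ) : ℂ), ((Real.cos (2 * π / q) : ℝ) : ℂ)})
    (γ : ℂ) (hγnotreal : γ.im ≠ 0) (hγint : IsIntegral ℤ γ)
    (hLγ : L ≤ IntermediateField.adjoin ℚ {γ})
    (r : ℕ) (hr : (minpoly ↥L γ).natDegree = r)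
    (b c : ↥L)
    (hb : (b : ℂ) = ((16 * Real.cos (π / p) ^ 2 * Real.cos (π / q) ^ 2 : ℝ) : ℂ))
    (hc : (c : ℂ) = ((16 * Real.cos (π / p) ^ 2 * Real.cos (π / q) ^ 2 *
      (4 * Real.cos (π / p) ^ 2 + 4 * Real.cos (π / q) ^ 2 - 4) : ℝ) : ℂ))
    (M : Polynomial ↥L)
    (hM : M = ∑ i ∈ Finset.range (r + 1),
      Polynomial.C ((minpoly ↥L γ).coeff i * b ^ (r - i)) *
        (Polynomial.X ^ 2 - Polynomial.C b * Polynomial.X + Polynomial.C c) ^ i) :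
    (∃ z ∈ IntermediateField.adjoin ℚ {γ},
        z ^ 2 - (b : ℂ) * z + ((c : ℂ) - (b : ℂ) * γ) = 0) ↔
    (∃ u v : Polynomial ↥L, u.Monic ∧ v.Monic ∧ u.natDegree = r ∧ v.natDegree = r ∧
      (∀ i, IsIntegral ℤ (u.coeff i)) ∧ (∀ i, IsIntegral ℤ (v.coeff i)) ∧ M = u * v) := by
  -- basic facts about b and c
  have hπp : Real.cos (π / p) > 0 := by
    apply Real.cos_pos_of_mem_Ioo
    constructor
    · have : (0:ℝ) < π / p := by positivity
      linarith [Real.pi_pos]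
    · calc π / p ≤ π / 3 := by
            apply div_le_div_of_nonneg_left Real.pi_pos.le (by norm_num)
              (by exact_mod_cast hp) |>.trans_eq rfl
          _ < π / 2 := by
            apply div_lt_div_of_pos_left Real.pi_pos (by norm_num) (by norm_num)
  have hπq : Real.cos (π / q) > 0 := by
    apply Real.cos_pos_of_mem_Ioo
    constructor
    · have : (0:ℝ) < π / q := by positivity
      linarith [Real.pi_pos]
    · calc π / q ≤ π / 3 := by
            apply div_le_div_of_nonneg_left Real.pi_pos.le (by norm_num)
              (by exact_mod_cast hq) |>.trans_eq rfl
          _ < π / 2 := by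
            apply div_lt_div_of_pos_left Real.pi_pos (by norm_num) (by norm_num)
  have hbne : (b : ℂ) ≠ 0 := by
    rw [hb]
    rw [Complex.ofReal_ne_zero]
    positivity
  have h2p := int2cos p (by omega)
  have h2q := int2cos q (by omega)
  have hbZ : IsIntegral ℤ (b : ℂ) := by
    have hbeq : (b : ℂ) = (2 * ((Real.cos (π / p) : ℝ) : ℂ)) ^ 2 *
        (2 * ((Real.cos (π / q) : ℝ) : ℂ)) ^ 2 := by
      rw [hb]; push_cast; ring
    rw [hbeq]
    exact (h2p.pow 2).mul (h2q.pow 2)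
  have h4Z : IsIntegral ℤ (4 : ℂ) := ⟨X - C 4, monic_X_sub_C _, by simp⟩
  have hcZ : IsIntegral ℤ (c : ℂ) := by
    have hceq : (c : ℂ) = ((2 * ((Real.cos (π / p) : ℝ) : ℂ)) ^ 2 *
        (2 * ((Real.cos (π / q) : ℝ) : ℂ)) ^ 2) *
        ((2 * ((Real.cos (π / p) : ℝ) : ℂ)) ^ 2 +
          (2 * ((Real.cos (π / q) : ℝ) : ℂ)) ^ 2 - 4) := by
      rw [hc]; push_cast; ring
    rw [hceq]
    exact ((h2p.pow 2).mul (h2q.pow 2)).mul (((h2p.pow 2).add (h2q.pow 2)).sub h4Z)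
  have hγL : IsIntegral ↥L γ := hγint.tower_top
  have hcoe : ∀ x : ↥L, algebraMap ↥L ℂ x = ↑x := fun x => rfl
  -- evaluation identity
  have hEval : ∀ w t : ℂ, w ^ 2 - (b : ℂ) * w + (c : ℂ) = (b : ℂ) * t →
      (Polynomial.aeval w) M = (b : ℂ) ^ r * (Polynomial.aeval t) (minpoly ↥L γ) := by
    intro w t hwt
    have hQ : (Polynomial.aeval w) ((X : Polynomial ↥L) ^ 2 - C b * X + C c) = (b : ℂ) * t := by
      simp only [map_add, map_sub, map_mul, map_pow, aeval_X, aeval_C, hcoe]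
      rw [← hwt]
    rw [hM, map_sum]
    simp only [map_mul, map_pow, aeval_C, hcoe, hQ]
    rw [Polynomial.aeval_eq_sum_range' (n := r + 1) (by rw [hr]; omega), Finset.mul_sum]
    apply Finset.sum_congr rfl
    intro i hi
    have hir : i ≤ r := Nat.lt_succ_iff.mp (Finset.mem_range.mp hi)
    have hpow : ((b : ℂ)) ^ (r - i) * (b : ℂ) ^ i = (b : ℂ) ^ r := by
      rw [← pow_add, Nat.sub_add_cancel hir]
    rw [Algebra.smul_def, hcoe]
    push_cast
    linear_combination ((minpoly ↥L γ).coeff i : ℂ) * t ^ i * hpow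
  -- membership transfer between adjoin over L and adjoin over ℚ
  have hKeq : IntermediateField.restrictScalars ℚ (IntermediateField.adjoin ↥L {γ}) =
      IntermediateField.adjoin ℚ {γ} := by
    exact (IntermediateField.restrictScalars_adjoin_eq_sup (K := L) (S := {γ})).trans (sup_eq_right.mpr hLγ)
  have hmem : ∀ x : ℂ, x ∈ IntermediateField.adjoin ↥L {γ} ↔
      x ∈ IntermediateField.adjoin ℚ {γ} := by
    intro x
    rw [← hKeq]
    exact Iff.rfl
  -- γ belongs to L(z) for any root z of the quadratic
  have hγadj : ∀ z : ℂ, z ^ 2 - (b : ℂ) * z + (c : ℂ) = (b : ℂ) * γ →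
      γ ∈ IntermediateField.adjoin ↥L {z} := by
    intro z hz
    have hzmem := IntermediateField.mem_adjoin_simple_self ↥L z
    have hbmem : (b : ℂ) ∈ IntermediateField.adjoin ↥L {z} := by
      rw [← hcoe b]; exact (IntermediateField.adjoin ↥L {z}).algebraMap_mem b
    have hcmem : (c : ℂ) ∈ IntermediateField.adjoin ↥L {z} := by
      rw [← hcoe c]; exact (IntermediateField.adjoin ↥L {z}).algebraMap_mem c
    have hγeq : γ = (b : ℂ)⁻¹ * (z ^ 2 - (b : ℂ) * z + (c : ℂ)) := by
      rw [hz]; field_simp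
    rw [hγeq]
    exact mul_mem (inv_mem hbmem)
      (add_mem (sub_mem (pow_mem hzmem 2) (mul_mem hbmem hzmem)) hcmem)
  -- M is monic of degree 2r
  have hr1 : 1 ≤ r := hr ▸ minpoly.natDegree_pos hγL
  set Qp : Polynomial ↥L := X ^ 2 - C b * X + C c with hQp
  have hQmonic : Qp.Monic := monicQuad b c
  have hQdeg : Qp.natDegree = 2 := natDegreeQuad b c
  set m' : Polynomial ↥L :=
    ∑ i ∈ Finset.range (r + 1), C ((minpoly ↥L γ).coeff i * b ^ (r - i)) * X ^ i with hm'
  have hcomp : m'.comp Qp = M := by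
    rw [hm', hM]
    simp only [Polynomial.comp, eval₂_finset_sum, eval₂_mul, eval₂_C, eval₂_X_pow]
  have hm'degle : m'.natDegree ≤ r := by
    apply Polynomial.natDegree_sum_le_of_forall_le
    intro i hi
    apply (Polynomial.natDegree_C_mul_le _ _).trans
    rw [natDegree_X_pow]
    exact Nat.lt_succ_iff.mp (Finset.mem_range.mp hi)
  have hm'coeff : m'.coeff r = 1 := by
    rw [hm', finset_sum_coeff]
    rw [Finset.sum_eq_single r]
    · rw [coeff_C_mul, coeff_X_pow, if_pos rfl, Nat.sub_self, pow_zero, mul_one, mul_one]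
      rw [← hr]
      exact (minpoly.monic hγL).coeff_natDegree
    · intro i _ hir
      rw [coeff_C_mul, coeff_X_pow, if_neg (fun h => hir h.symm), mul_zero]
    · intro h
      exact absurd (Finset.self_mem_range_succ r) h
  have hm'monic : m'.Monic := monic_of_natDegree_le_of_coeff_eq_one r hm'degle hm'coeff
  have hm'deg : m'.natDegree = r :=
    le_antisymm hm'degle (le_natDegree_of_ne_zero (by rw [hm'coeff]; exact one_ne_zero))
  have hMmonic : M.Monic := by
    rw [← hcomp]
    exact hm'monic.comp hQmonic (by rw [hQdeg]; omega)
  have hMdeg : M.natDegree = 2 * r := by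
    rw [← hcomp, natDegree_comp, hm'deg, hQdeg]; ring
  -- any monic divisor of M has algebraic-integer coefficients
  have hinj : Function.Injective (algebraMap ↥L ℂ) := (algebraMap ↥L ℂ).injective
  have factInt : ∀ f : Polynomial ↥L, f.Monic → f ∣ M → ∀ i, IsIntegral ℤ (f.coeff i) := by
    intro f hf hfdvd i
    have hroots : ∀ w ∈ (f.map (algebraMap ↥L ℂ)).roots, IsIntegral ℤ w := by
      intro w hw
      have hw0 : (Polynomial.aeval w) f = 0 := by
        have := (Polynomial.mem_roots (by
          exact (hf.map (algebraMap ↥L ℂ)).ne_zero)).mp hw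
        rw [Polynomial.aeval_def, Polynomial.eval₂_eq_eval_map]
        exact this
      have hMw : (Polynomial.aeval w) M = 0 := by
        obtain ⟨g, hg⟩ := hfdvd
        rw [hg, map_mul, hw0, zero_mul]
      set t : ℂ := (w ^ 2 - (b : ℂ) * w + (c : ℂ)) / (b : ℂ) with ht
      have hbt : w ^ 2 - (b : ℂ) * w + (c : ℂ) = (b : ℂ) * t := by
        rw [ht]; field_simp
      have htm : (Polynomial.aeval t) (minpoly ↥L γ) = 0 := by
        have := hEval w t hbt
        rw [hMw] at this
        have hb0 : (b : ℂ) ^ r ≠ 0 := pow_ne_zero _ hbne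
        exact (mul_eq_zero.mp this.symm).resolve_left hb0
      have htZ : IsIntegral ℤ t := by
        refine ⟨minpoly ℤ γ, minpoly.monic hγint, ?_⟩
        have hdvd2 : minpoly ↥L γ ∣ (minpoly ℤ γ).map (algebraMap ℤ ↥L) :=
          minpoly.dvd ↥L γ (by
            rw [Polynomial.aeval_map_algebraMap]
            exact minpoly.aeval ℤ γ)
        obtain ⟨s, hs⟩ := hdvd2
        have : (Polynomial.aeval t) ((minpoly ℤ γ).map (algebraMap ℤ ↥L)) = 0 := by
          rw [hs, map_mul, htm, zero_mul]
        rwa [Polynomial.aeval_map_algebraMap] at this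
      exact quadInt hbZ hcZ htZ (by rw [← hbt]; ring)
    rw [← isIntegral_algebraMap_iff hinj, ← Polynomial.coeff_map]
    have hsplit := Polynomial.Splits.eq_prod_roots_of_monic
      (IsAlgClosed.splits _) (hf.map (algebraMap ↥L ℂ))
    rw [hsplit]
    exact prodCoeffInt _ hroots i
  constructor
  · rintro ⟨z, hzK, hz⟩
    have hzbγ : z ^ 2 - (b : ℂ) * z + (c : ℂ) = (b : ℂ) * γ := by
      linear_combination hz
    have hzZ : IsIntegral ℤ z := quadInt hbZ hcZ hγint hz
    have hzL : IsIntegral ↥L z := hzZ.tower_top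
    have hMz : (Polynomial.aeval z) M = 0 := by
      rw [hEval z γ hzbγ, minpoly.aeval, mul_zero]
    have hudvd : minpoly ↥L z ∣ M := minpoly.dvd ↥L z hMz
    obtain ⟨v, huv⟩ := hudvd
    have humonic : (minpoly ↥L z).Monic := minpoly.monic hzL
    have hadj_eq : IntermediateField.adjoin ↥L {z} = IntermediateField.adjoin ↥L {γ} := by
      apply le_antisymm
      · exact IntermediateField.adjoin_simple_le_iff.mpr ((hmem z).mpr hzK)
      · exact IntermediateField.adjoin_simple_le_iff.mpr (hγadj z hzbγ)
    have hudeg : (minpoly ↥L z).natDegree = r := by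
      rw [← IntermediateField.adjoin.finrank hzL, hadj_eq,
        IntermediateField.adjoin.finrank hγL, hr]
    have hvmonic : v.Monic := humonic.of_mul_monic_left (huv ▸ hMmonic)
    have hvdeg : v.natDegree = r := by
      have := hMdeg
      rw [huv, humonic.natDegree_mul hvmonic, hudeg] at this
      omega
    exact ⟨minpoly ↥L z, v, humonic, hvmonic, hudeg, hvdeg,
      factInt _ humonic ⟨v, huv⟩, factInt _ hvmonic ⟨minpoly ↥L z, by rw [huv, mul_comm]⟩, huv⟩
  · rintro ⟨u, v, hu, hv, hur, hvr, _, _, huv⟩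
    -- take a complex root of the quadratic
    obtain ⟨z, hzroot⟩ := Complex.exists_root (f := X ^ 2 - C (b : ℂ) * X + C ((c : ℂ) - (b : ℂ) * γ))
      (by
        have : ((X : Polynomial ℂ) ^ 2 - C (b : ℂ) * X +
            C ((c : ℂ) - (b : ℂ) * γ)).natDegree = 2 := natDegreeQuad _ _
        rw [degree_eq_natDegree (monicQuad (b : ℂ) ((c : ℂ) - (b : ℂ) * γ)).ne_zero, this]
        decide)
    have hz : z ^ 2 - (b : ℂ) * z + ((c : ℂ) - (b : ℂ) * γ) = 0 := by
      have := hzroot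
      simp only [Polynomial.IsRoot, eval_add, eval_sub, eval_mul, eval_pow, eval_X, eval_C] at this
      linear_combination this
    have hzbγ : z ^ 2 - (b : ℂ) * z + (c : ℂ) = (b : ℂ) * γ := by
      linear_combination hz
    have hzZ : IsIntegral ℤ z := quadInt hbZ hcZ hγint hz
    have hzL : IsIntegral ↥L z := hzZ.tower_top
    have hMz : (Polynomial.aeval z) M = 0 := by
      rw [hEval z γ hzbγ, minpoly.aeval, mul_zero]
    have hzu : (Polynomial.aeval z) u = 0 ∨ (Polynomial.aeval z) v = 0 := by
      apply mul_eq_zero.mp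
      rw [← map_mul, ← huv]
      exact hMz
    have hkey : ∀ f : Polynomial ↥L, f.Monic → f.natDegree = r →
        (Polynomial.aeval z) f = 0 → z ∈ IntermediateField.adjoin ℚ {γ} := by
      intro f hf hfr hfz
      have hdvdf : minpoly ↥L z ∣ f := minpoly.dvd ↥L z hfz
      have hle : (minpoly ↥L z).natDegree ≤ r := by
        rw [← hfr]
        exact Polynomial.natDegree_le_of_dvd hdvdf hf.ne_zero
      haveI : FiniteDimensional ↥L ↥(IntermediateField.adjoin ↥L {z}) :=
        IntermediateField.adjoin.finiteDimensional hzL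
      have hsub : IntermediateField.adjoin ↥L {γ} ≤ IntermediateField.adjoin ↥L {z} :=
        IntermediateField.adjoin_simple_le_iff.mpr (hγadj z hzbγ)
      have heq : IntermediateField.adjoin ↥L {γ} = IntermediateField.adjoin ↥L {z} := by
        apply IntermediateField.eq_of_le_of_finrank_le hsub
        rw [IntermediateField.adjoin.finrank hzL, IntermediateField.adjoin.finrank hγL, hr]
        exact hle
      have : z ∈ IntermediateField.adjoin ↥L {γ} := by
        rw [heq]
        exact IntermediateField.mem_adjoin_simple_self ↥L z
      exact (hmem z).mp this
    rcases hzu with h | h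
    · exact ⟨z, hkey u hu hur h, hz⟩
    · exact ⟨z, hkey v hv hvr h, hz⟩
end

section
/- Let A, H ∈ SL(2,ℂ) with tr H = 0. Then γ(A, HAH⁻¹) = γ(H,A)·(γ(H,A) − β(A)), i.e. tr(A·(HAH⁻¹)·A⁻¹·(HAH⁻¹)⁻¹) − 2 = (tr(HAH⁻¹A⁻¹) − 2)·((tr(HAH⁻¹A⁻¹) − 2) − ((tr A)² − 4)). -/
/-- For A, H ∈ SL(2,ℂ) with tr H = 0,
γ(A, HAH⁻¹) = γ(H,A)·(γ(H,A) − β(A)). -/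
theorem stmt_11 (A H : Matrix.SpecialLinearGroup (Fin 2) ℂ)
    (hH : Matrix.trace (H : Matrix (Fin 2) (Fin 2) ℂ) = 0) :
    Matrix.trace ((A * (H * A * H⁻¹) * A⁻¹ * (H * A * H⁻¹)⁻¹ :
        Matrix.SpecialLinearGroup (Fin 2) ℂ) : Matrix (Fin 2) (Fin 2) ℂ) - 2 =
      (Matrix.trace ((H * A * H⁻¹ * A⁻¹ : Matrix.SpecialLinearGroup (Fin 2) ℂ) :
          Matrix (Fin 2) (Fin 2) ℂ) - 2) *
      ((Matrix.trace ((H * A * H⁻¹ * A⁻¹ : Matrix.SpecialLinearGroup (Fin 2) ℂ) :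
          Matrix (Fin 2) (Fin 2) ℂ) - 2) -
        ((Matrix.trace (A : Matrix (Fin 2) (Fin 2) ℂ)) ^ 2 - 4)) := by
  have hA : (A : Matrix (Fin 2) (Fin 2) ℂ) 0 0 * (A : Matrix (Fin 2) (Fin 2) ℂ) 1 1
      - (A : Matrix (Fin 2) (Fin 2) ℂ) 0 1 * (A : Matrix (Fin 2) (Fin 2) ℂ) 1 0 = 1 := by
    have := A.2; rwa [Matrix.det_fin_two] at this
  have hHd : (H : Matrix (Fin 2) (Fin 2) ℂ) 0 0 * (H : Matrix (Fin 2) (Fin 2) ℂ) 1 1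
      - (H : Matrix (Fin 2) (Fin 2) ℂ) 0 1 * (H : Matrix (Fin 2) (Fin 2) ℂ) 1 0 = 1 := by
    have := H.2; rwa [Matrix.det_fin_two] at this
  have hs : (H : Matrix (Fin 2) (Fin 2) ℂ) 0 0 + (H : Matrix (Fin 2) (Fin 2) ℂ) 1 1 = 0 := by
    rwa [Matrix.trace_fin_two] at hH
  simp only [Matrix.SpecialLinearGroup.coe_mul, Matrix.SpecialLinearGroup.coe_inv,
    Matrix.adjugate_fin_two, Matrix.trace_fin_two, Matrix.mul_apply, Fin.sum_univ_two,
    Matrix.of_apply, Matrix.cons_val', Matrix.cons_val_zero, Matrix.cons_val_one,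
    Matrix.head_cons, Matrix.head_fin_const, Matrix.empty_val', Matrix.cons_val_fin_one] at *
  set a := (A : Matrix (Fin 2) (Fin 2) ℂ) 0 0
  set b := (A : Matrix (Fin 2) (Fin 2) ℂ) 0 1
  set c := (A : Matrix (Fin 2) (Fin 2) ℂ) 1 0
  set d := (A : Matrix (Fin 2) (Fin 2) ℂ) 1 1
  set p := (H : Matrix (Fin 2) (Fin 2) ℂ) 0 0
  set q := (H : Matrix (Fin 2) (Fin 2) ℂ) 0 1
  set r := (H : Matrix (Fin 2) (Fin 2) ℂ) 1 0
  set s := (H : Matrix (Fin 2) (Fin 2) ℂ) 1 1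
  have hA : a * d - b * c = 1 := hA
  have hHd : p * s - q * r = 1 := hHd
  have hs : p + s = 0 := hs
  linear_combination (((1)*a^4*p*q*r + (-2)*a^3*b*p^2*r + (1)*a^3*b*p*r*s + (-1)*a^3*b*q*r^2 + (-1)*a^3*b*r + (-2)*a^3*c*p^2*q + (1)*a^3*c*p*q*s + (-1)*a^3*c*q^2*r + (-1)*a^3*c*q + (2)*a^3*d*p + (-1)*a^2*b^2*p*r^2 + (4)*a^2*b*c*p^3 + (-3)*a^2*b*c*p^2*s + (5)*a^2*b*c*p*q*r + (1)*a^2*b*c*p*s^2 + (1)*a^2*b*c*p + (-1)*a^2*b*c*q*r*s + (-1)*a^2*b*c*s + (-2)*a^2*b*d*p^2*r + (1)*a^2*b*d*p*r*s + (-1)*a^2*b*d*q*r^2 + (-1)*a^2*b*d*r + (-1)*a^2*c^2*p*q^2 + (-2)*a^2*c*d*p^2*q + (1)*a^2*c*d*p*q*s + (-1)*a^2*c*d*q^2*r + (-1)*a^2*c*d*q + (2)*a^2*d^2*p^3 + (-2)*a^2*d^2*p^2*s + (2)*a^2*d^2*p*q*r + (4)*a^2*d^2*p + (-2)*a*b^2*d*p*r^2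 + (4)*a*b*c*d*p^3 + (-2)*a*b*c*d*p^2*s + (2)*a*b*c*d*p*q*r + (2)*a*b*c*d*p*s^2 + (2)*a*b*c*d*p + (-2)*a*b*c*d*q*r*s + (-2)*a*b*c*d*s + (2)*a*b*d^2*p^2*r + (-1)*a*b*d^2*p*r*s + (1)*a*b*d^2*q*r^2 + (1)*a*b*d^2*r + (-2)*a*c^2*d*p*q^2 + (2)*a*c*d^2*p^2*q + (-1)*a*c*d^2*p*q*s + (1)*a*c*d^2*q^2*r + (1)*a*c*d^2*q + (2)*a*d^3*p + (2)*b^2*c^2*p^3 + (-2)*b^2*c^2*p^2*s + (4)*b^2*c^2*p*q*r + (-1)*b^2*d^2*p*r^2 + (4)*b*c*d^2*p^3 + (-3)*b*c*d^2*p^2*s + (5)*b*c*d^2*p*q*r + (1)*b*c*d^2*p*s^2 + (1)*b*c*d^2*p + (-1)*b*c*d^2*q*r*s + (-1)*b*c*d^2*s + (2)*b*d^3*p^2*r + (-1)*b*d^3*p*r*s + (1)*b*d^3*q*r^2 + (1)*b*d^3*r + (-1)*c^2*d^2*p*q^2 + (2)*c*d^3*p^2*q + (-1)*c*d^3*p*q*s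 + (1)*c*d^3*q^2*r + (1)*c*d^3*q + (1)*d^4*p*q*r) + p*((-1)*a^4*q*r + (2)*a^3*b*p*r + (2)*a^3*c*p*q + (1)*a^2*b^2*r^2 + (-4)*a^2*b*c*p^2 + (-2)*a^2*b*c*q*r + (1)*a^2*c^2*q^2 + (-2)*a^2 + (2)*a*b^2*c*p*r + (2)*a*b*c^2*p*q + (2)*a*b*p*r + (2)*a*c*p*q + (2)*b^3*c*r^2 + (-8)*b^2*c^2*p^2 + (-2)*b^2*c^2*q*r + (-2)*b^2*c*d*p*r + (1)*b^2*d^2*r^2 + (2)*b^2*r^2 + (2)*b*c^3*q^2 + (-2)*b*c^2*d*p*q + (-4)*b*c*d^2*p^2 + (-2)*b*c*d^2*q*r + (-8)*b*c*p^2 + (-4)*b*c + (-2)*b*d^3*p*r + (-2)*b*d*p*r + (1)*c^2*d^2*q^2 + (2)*c^2*q^2 + (-2)*c*d^3*p*q + (-2)*c*d*p*q + (-1)*d^4*q*r + (-2)*d^2 + (-2)*p^2 + (-2)))*hs + ((-2)*a^2*p^2 + (-2)*a^2*q*r + (2)*a*b*p^3*r + (2)*a*b*p*q*r^2 + (2)*a*b*p*r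 + (2)*a*c*p^3*q + (2)*a*c*p*q^2*r + (2)*a*c*p*q + (-2)*a*d*p^4 + (-2)*a*d*p^2*q*r + (-4)*a*d*p^2 + (-2)*a*d*q*r + (2)*b^2*p^2*r^2 + (2)*b^2*q*r^3 + (2)*b^2*r^2 + (-6)*b*c*p^4 + (-6)*b*c*p^2*q*r + (-8)*b*c*p^2 + (-2)*b*c*q*r + (-2)*b*d*p^3*r + (-2)*b*d*p*q*r^2 + (-2)*b*d*p*r + (2)*c^2*p^2*q^2 + (2)*c^2*q^3*r + (2)*c^2*q^2 + (-2)*c*d*p^3*q + (-2)*c*d*p*q^2*r + (-2)*c*d*p*q + (-2)*d^2*p^2 + (-2)*d^2*q*r + (-2)*p^4 + (-2)*p^2*q*r + (-4)*p^2 + (-2)*q*r + (-4))*hA - ((-1)*a^4*q*r + (2)*a^3*b*p*r + (2)*a^3*c*p*q + (1)*a^2*b^2*r^2 + (-4)*a^2*b*c*p^2 + (-2)*a^2*b*c*q*r + (1)*a^2*c^2*q^2 + (-2)*a^2 + (2)*a*b^2*c*p*r + (2)*a*b*c^2*p*q + (2)*a*b*p*r + (2)*a*c*p*q + (2)*b^3*c*r^2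 + (-8)*b^2*c^2*p^2 + (-2)*b^2*c^2*q*r + (-2)*b^2*c*d*p*r + (1)*b^2*d^2*r^2 + (2)*b^2*r^2 + (2)*b*c^3*q^2 + (-2)*b*c^2*d*p*q + (-4)*b*c*d^2*p^2 + (-2)*b*c*d^2*q*r + (-8)*b*c*p^2 + (-4)*b*c + (-2)*b*d^3*p*r + (-2)*b*d*p*r + (1)*c^2*d^2*q^2 + (2)*c^2*q^2 + (-2)*c*d^3*p*q + (-2)*c*d*p*q + (-1)*d^4*q*r + (-2)*d^2 + (-2)*p^2 + (-2))*hHd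
end

section
/- Let B < 0 be a real number and let y₁, y₂, y₃, y₄ be real numbers with B < y₄ ≤ y₃ ≤ y₂ ≤ y₁ < 0. Set c₀ = y₁y₂y₃y₄ and c₁ = −c₀·(1/y₁ + 1/y₂ + 1/y₃ + 1/y₄). Then c₁ ≤ c₀·[ (−B)³/c₀ + ((−B)²/c₀)^{1/2} + ((−B)/c₀)^{1/3} + (1/c₀)^{1/4} ]. -/
lemma aux_rpow (x y : ℝ) (n : ℕ) (hn : 0 < n) (hx : 0 ≤ x) (h : x ^ n ≤ y) :
    x ≤ y ^ ((1:ℝ)/n) := by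
  have hx' : x = (x ^ n) ^ ((1:ℝ)/n) := by
    rw [← Real.rpow_natCast x n, ← Real.rpow_mul hx]
    rw [mul_one_div, div_self (by exact_mod_cast hn.ne'), Real.rpow_one]
  rw [hx']
  exact Real.rpow_le_rpow (by positivity) h (by positivity)

/-- Let B < 0 and B < y₄ ≤ y₃ ≤ y₂ ≤ y₁ < 0, c₀ = y₁y₂y₃y₄,
c₁ = −c₀(1/y₁ + 1/y₂ + 1/y₃ + 1/y₄). Then
c₁ ≤ c₀[(−B)³/c₀ + ((−B)²/c₀)^{1/2} + ((−B)/c₀)^{1/3} + (1/c₀)^{1/4}]. -/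
theorem stmt_14 (B : ℝ) (hB : B < 0) (y₁ y₂ y₃ y₄ : ℝ)
    (h4 : B < y₄) (h43 : y₄ ≤ y₃) (h32 : y₃ ≤ y₂) (h21 : y₂ ≤ y₁) (h1 : y₁ < 0)
    (c₀ c₁ : ℝ)
    (hc₀ : c₀ = y₁ * y₂ * y₃ * y₄)
    (hc₁ : c₁ = -c₀ * (1 / y₁ + 1 / y₂ + 1 / y₃ + 1 / y₄)) :
    c₁ ≤ c₀ * ((-B) ^ 3 / c₀ + ((-B) ^ 2 / c₀) ^ ((1 : ℝ) / 2) +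
      ((-B) / c₀) ^ ((1 : ℝ) / 3) + (1 / c₀) ^ ((1 : ℝ) / 4)) := by
  set M := -B with hM
  set a₁ := -y₁ with ha₁d
  set a₂ := -y₂ with ha₂d
  set a₃ := -y₃ with ha₃d
  set a₄ := -y₄ with ha₄d
  have hM0 : 0 < M := by simp [hM]; linarith
  have h1p : 0 < a₁ := by simp [ha₁d]; linarith
  have h2p : 0 < a₂ := by simp [ha₂d]; linarith
  have h3p : 0 < a₃ := by simp [ha₃d]; linarith
  have h4p : 0 < a₄ := by simp [ha₄d]; linarith
  have h12 : a₁ ≤ a₂ := by simp [ha₁d, ha₂d]; linarith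
  have h23 : a₂ ≤ a₃ := by simp [ha₂d, ha₃d]; linarith
  have h34 : a₃ ≤ a₄ := by simp [ha₃d, ha₄d]; linarith
  have h4M : a₄ ≤ M := by simp [ha₄d, hM]; linarith
  have hc₀' : c₀ = a₁ * a₂ * a₃ * a₄ := by rw [hc₀]; ring
  have hc₀p : 0 < c₀ := by rw [hc₀']; positivity
  have n1 : y₁ ≠ 0 := h1.ne
  have n2 : y₂ ≠ 0 := by intro h; rw [h] at h21; linarith
  have n3 : y₃ ≠ 0 := by intro h; rw [h] at h32; linarith
  have n4 : y₄ ≠ 0 := by intro h; rw [h] at h43; linarith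
  have h3M : a₃ ≤ M := le_trans h34 h4M
  have h2M : a₂ ≤ M := le_trans h23 h3M
  have hc₁' : c₁ = c₀ * (1 / a₁ + 1 / a₂ + 1 / a₃ + 1 / a₄) := by
    rw [hc₁, ha₁d, ha₂d, ha₃d, ha₄d]
    field_simp
    ring
  rw [hc₁']
  apply mul_le_mul_of_nonneg_left _ hc₀p.le
  have t1 : 1 / a₁ ≤ M ^ 3 / c₀ := by
    rw [div_le_div_iff₀ h1p hc₀p, hc₀']
    calc 1 * (a₁ * a₂ * a₃ * a₄) = a₂ * a₃ * a₄ * a₁ := by ring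
      _ ≤ M * M * M * a₁ := by gcongr <;> linarith
      _ = M ^ 3 * a₁ := by ring
  have t2 : 1 / a₂ ≤ (M ^ 2 / c₀) ^ ((1:ℝ)/2) := by
    apply aux_rpow _ _ 2 (by norm_num) (by positivity)
    rw [div_pow, one_pow, div_le_div_iff₀ (by positivity) hc₀p, hc₀']
    calc 1 * (a₁ * a₂ * a₃ * a₄) = a₁ * a₂ * a₃ * a₄ := by ring
      _ ≤ a₂ * a₂ * M * M := by gcongr <;> linarith
      _ = M ^ 2 * a₂ ^ 2 := by ring
  have t3 : 1 / a₃ ≤ (M / c₀) ^ ((1:ℝ)/3) := by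
    apply aux_rpow _ _ 3 (by norm_num) (by positivity)
    rw [div_pow, one_pow, div_le_div_iff₀ (by positivity) hc₀p, hc₀']
    calc 1 * (a₁ * a₂ * a₃ * a₄) = a₁ * a₂ * a₃ * a₄ := by ring
      _ ≤ a₃ * a₃ * a₃ * M := by gcongr <;> linarith
      _ = M * a₃ ^ 3 := by ring
  have t4 : 1 / a₄ ≤ (1 / c₀) ^ ((1:ℝ)/4) := by
    apply aux_rpow _ _ 4 (by norm_num) (by positivity)
    rw [div_pow, one_pow, div_le_div_iff₀ (by positivity) hc₀p, hc₀']
    calc 1 * (a₁ * a₂ * a₃ * a₄) ≤ 1 * (a₄ * a₄ * a₄ * a₄) := by gcongr <;> linarith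
      _ = 1 * a₄ ^ 4 := by ring
  linarith [t1, t2, t3, t4]
end
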